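/- arXiv:1508.03921 — 2 statements merged into one kernel-verified Lean document; each statement's English description precedes it below -/
import Mathlib

section
/- Fix a stopping time σ ∈ 𝒯 and consider, in the zero-sum case U¹ = −U² = U, the sub-game u_σ^i(ρ,τ) := E[U^i(ρ[τ],τ[ρ]) | 𝓕_σ] over strategies in 𝔗_σ := {(ρ₀,ρ₁) ∈ 𝔗 : ρ₀ ≥ σ}. Let (ρ_σ^ε, τ_σ^ε) be an ε-saddle point of the conditional Dynkin game v_σ := ess sup_{ρ₀∈𝒯_σ} ess inf_{τ₀∈𝒯_σ} E[X_{ρ₀}1_{ρ₀<τ₀} + Y_{τ₀}1_{ρ₀>τ₀} + Z_{ρ₀}1_{ρ₀=τ₀} | 𝓕_σ] (which equals the corresponding ess inf–ess sup). Then ((ρ_σ^ε, ρ_h), (τ_σ^ε, τ_h)) ∈ 𝔗_σ × 𝔗_σ is a 5ε-Nash equilibrium for the sub-game (with h small enough as in the approximation lemma). -/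
/-!
Common setup for "On the non-zero-sum stopping game ending at the maximum of the stopping
strategies".  Time is indexed by `[0,∞] = ℝ≥0∞`.  Since `Ω` is at most countable and `ℙ`
charges every point, essential suprema/infima over families of stopping times coincide with
the pointwise ones, which is how they are formalized below.
-/

open MeasureTheory Filter Set
open scoped ENNReal Topology

noncomputable section

namespace StoppingGames

variable {Ω : Type*} [mΩ : MeasurableSpace Ω]

/-- `|a - b|` on `[0,∞]`, via truncated subtraction. -/
def dd (a b : ℝ≥0∞) : ℝ≥0∞ := (a - b) + (b - a)

/-- `𝒯`, the set of stopping times with values in `[0,∞]`. -/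
def ST (𝓕 : Filtration ℝ≥0∞ mΩ) : Set (Ω → ℝ≥0∞) := {τ | IsStoppingTime 𝓕 (fun ω => (τ ω : WithTop ℝ≥0∞))}

/-- `𝒯_σ`, the stopping times no less than `σ`. -/
def STge (𝓕 : Filtration ℝ≥0∞ mΩ) (σ : Ω → ℝ≥0∞) : Set (Ω → ℝ≥0∞) :=
  {τ | IsStoppingTime 𝓕 (fun ω => (τ ω : WithTop ℝ≥0∞)) ∧ ∀ ω, σ ω ≤ τ ω}

/-- `𝒯_{t+}`, the stopping times strictly greater than `t`. -/
def STgt (𝓕 : Filtration ℝ≥0∞ mΩ) (t : ℝ≥0∞) : Set (Ω → ℝ≥0∞) :=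
  {τ | IsStoppingTime 𝓕 (fun ω => (τ ω : WithTop ℝ≥0∞)) ∧ ∀ ω, t < τ ω}

/-- The class `𝕋` of jointly measurable maps `φ : [0,∞] × Ω → [0,∞]` with
`φ(t,·) ∈ 𝒯_{t+}` for every finite `t`. -/
def IsTT (𝓕 : Filtration ℝ≥0∞ mΩ) (φ : ℝ≥0∞ → Ω → ℝ≥0∞) : Prop :=
  Measurable (Function.uncurry φ) ∧ ∀ t : ℝ≥0∞, t ≠ ∞ → φ t ∈ STgt 𝓕 t

/-- A stopping strategy `ρ = (ρ₀, ρ₁) ∈ 𝔗`. -/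
def IsStrategy (𝓕 : Filtration ℝ≥0∞ mΩ) (ρ : (Ω → ℝ≥0∞) × (ℝ≥0∞ → Ω → ℝ≥0∞)) : Prop :=
  IsStoppingTime 𝓕 (fun ω => (ρ.1 ω : WithTop ℝ≥0∞)) ∧ IsTT 𝓕 ρ.2

/-- `𝔗_σ`, the stopping strategies whose first component is `≥ σ`. -/
def IsStrategyGe (𝓕 : Filtration ℝ≥0∞ mΩ) (σ : Ω → ℝ≥0∞)
    (ρ : (Ω → ℝ≥0∞) × (ℝ≥0∞ → Ω → ℝ≥0∞)) : Prop :=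
  IsStrategy 𝓕 ρ ∧ ∀ ω, σ ω ≤ ρ.1 ω

/-- `ρ[τ] = ρ₀ 1_{ρ₀ ≤ τ₀} + ρ₁(τ₀) 1_{ρ₀ > τ₀}`. -/
def play (ρ τ : (Ω → ℝ≥0∞) × (ℝ≥0∞ → Ω → ℝ≥0∞)) : Ω → ℝ≥0∞ := fun ω =>
  if ρ.1 ω ≤ τ.1 ω then ρ.1 ω else ρ.2 (τ.1 ω) ω

/-- `u(ρ,τ) = E[U(ρ[τ], τ[ρ])]`. -/
def payoff (μ : Measure Ω) (U : ℝ≥0∞ → ℝ≥0∞ → Ω → ℝ)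
    (ρ τ : (Ω → ℝ≥0∞) × (ℝ≥0∞ → Ω → ℝ≥0∞)) : ℝ :=
  ∫ ω, U (play ρ τ ω) (play τ ρ ω) ω ∂μ

/-- `u_σ(ρ,τ) = E[U(ρ[τ], τ[ρ]) | m]`. -/
def condPayoff (μ : Measure Ω) (m : MeasurableSpace Ω) (U : ℝ≥0∞ → ℝ≥0∞ → Ω → ℝ)
    (ρ τ : (Ω → ℝ≥0∞) × (ℝ≥0∞ → Ω → ℝ≥0∞)) : Ω → ℝ :=
  μ[fun ω => U (play ρ τ ω) (play τ ρ ω) ω | m]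

/-- The grid point `n·h ∈ [0,∞]`. -/
def grid (h : ℝ) (n : ℕ) : ℝ≥0∞ := ENNReal.ofReal (n * h)

/-- `⌊t/h⌋ + 1`. -/
def gridIdx (h : ℝ) (t : ℝ≥0∞) : ℕ := ⌊t.toReal / h⌋₊ + 1

/-- `ρ_h(t) := ρ̄((⌊t/h⌋+1)h)` for finite `t`, and `ρ_h(∞) := ∞`. -/
def gridStrat (h : ℝ) (bar : ℕ → Ω → ℝ≥0∞) : ℝ≥0∞ → Ω → ℝ≥0∞ := fun t ω =>
  if t = ∞ then ∞ else bar (gridIdx h t) ω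

/-- Evaluation `φ(σ) : ω ↦ φ(σ(ω), ω)` of a time-indexed family along a random time. -/
def evalAt (φ : ℝ≥0∞ → Ω → ℝ≥0∞) (σ : Ω → ℝ≥0∞) : Ω → ℝ≥0∞ := fun ω => φ (σ ω) ω

/-- `X_t = ess inf_{σ ∈ 𝒯_t} E[U(t,σ) | 𝓕_t]` (pointwise infimum, which coincides with the
essential one since `Ω` is countable and every point is charged). -/
def X1v (μ : Measure Ω) (𝓕 : Filtration ℝ≥0∞ mΩ) (U : ℝ≥0∞ → ℝ≥0∞ → Ω → ℝ)
    (t : ℝ≥0∞) (ω : Ω) : ℝ :=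
  ⨅ σ : STge 𝓕 (fun _ => t), (μ[fun ω' => U t (σ.1 ω') ω' | 𝓕 t]) ω

/-- `Y_t = ess sup_{σ ∈ 𝒯_t} E[U(σ,t) | 𝓕_t]`. -/
def Y1v (μ : Measure Ω) (𝓕 : Filtration ℝ≥0∞ mΩ) (U : ℝ≥0∞ → ℝ≥0∞ → Ω → ℝ)
    (t : ℝ≥0∞) (ω : Ω) : ℝ :=
  ⨆ σ : STge 𝓕 (fun _ => t), (μ[fun ω' => U (σ.1 ω') t ω' | 𝓕 t]) ω

/-- Player 2: `X²_t = ess sup_{σ ∈ 𝒯_t} E[U²(t,σ) | 𝓕_t]`. -/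
def X2v (μ : Measure Ω) (𝓕 : Filtration ℝ≥0∞ mΩ) (U : ℝ≥0∞ → ℝ≥0∞ → Ω → ℝ)
    (t : ℝ≥0∞) (ω : Ω) : ℝ :=
  ⨆ σ : STge 𝓕 (fun _ => t), (μ[fun ω' => U t (σ.1 ω') ω' | 𝓕 t]) ω

/-- Player 2: `Y²_t = ess inf_{σ ∈ 𝒯_t} E[U²(σ,t) | 𝓕_t]`. -/
def Y2v (μ : Measure Ω) (𝓕 : Filtration ℝ≥0∞ mΩ) (U : ℝ≥0∞ → ℝ≥0∞ → Ω → ℝ)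
    (t : ℝ≥0∞) (ω : Ω) : ℝ :=
  ⨅ σ : STge 𝓕 (fun _ => t), (μ[fun ω' => U (σ.1 ω') t ω' | 𝓕 t]) ω

/-- `Z_t = U(t,t)`. -/
def Zv (U : ℝ≥0∞ → ℝ≥0∞ → Ω → ℝ) : ℝ≥0∞ → Ω → ℝ := fun t ω => U t t ω

/-- `X_{ρ₀} 1_{ρ₀ < τ₀} + Y_{τ₀} 1_{ρ₀ > τ₀} + Z_{ρ₀} 1_{ρ₀ = τ₀}`. -/
def dynkinKernel (X Y Z : ℝ≥0∞ → Ω → ℝ) (ρ₀ τ₀ : Ω → ℝ≥0∞) (ω : Ω) : ℝ :=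
  if ρ₀ ω < τ₀ ω then X (ρ₀ ω) ω else if τ₀ ω < ρ₀ ω then Y (τ₀ ω) ω else Z (ρ₀ ω) ω

/-- The Dynkin-game payoff `V(ρ₀,τ₀)`. -/
def dynkinV (μ : Measure Ω) (X Y Z : ℝ≥0∞ → Ω → ℝ) (ρ₀ τ₀ : Ω → ℝ≥0∞) : ℝ :=
  ∫ ω, dynkinKernel X Y Z ρ₀ τ₀ ω ∂μ

/-- The conditional Dynkin-game payoff. -/
def condDynkin (μ : Measure Ω) (m : MeasurableSpace Ω) (X Y Z : ℝ≥0∞ → Ω → ℝ)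
    (ρ₀ τ₀ : Ω → ℝ≥0∞) : Ω → ℝ :=
  μ[fun ω => dynkinKernel X Y Z ρ₀ τ₀ ω | m]

/-- `v_t¹`, the (sup-inf) value of the conditional Dynkin game `G_t¹` with payoffs
`(X¹, Y¹, Z¹)` built from `U¹`. -/
def v1v (μ : Measure Ω) (𝓕 : Filtration ℝ≥0∞ mΩ) (U : ℝ≥0∞ → ℝ≥0∞ → Ω → ℝ)
    (t : ℝ≥0∞) (ω : Ω) : ℝ :=
  ⨆ ρ₀ : STge 𝓕 (fun _ => t), ⨅ τ₀ : STge 𝓕 (fun _ => t),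
    condDynkin μ (𝓕 t) (X1v μ 𝓕 U) (Y1v μ 𝓕 U) (Zv U) ρ₀.1 τ₀.1 ω

/-- `v_t²`, the (inf-sup) value of the conditional Dynkin game `G_t²` with payoffs
`(X², Y², Z²)` built from `U²`. -/
def v2v (μ : Measure Ω) (𝓕 : Filtration ℝ≥0∞ mΩ) (U : ℝ≥0∞ → ℝ≥0∞ → Ω → ℝ)
    (t : ℝ≥0∞) (ω : Ω) : ℝ :=
  ⨅ ρ₀ : STge 𝓕 (fun _ => t), ⨆ τ₀ : STge 𝓕 (fun _ => t),
    condDynkin μ (𝓕 t) (X2v μ 𝓕 U) (Y2v μ 𝓕 U) (Zv U) ρ₀.1 τ₀.1 ω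

/-- `W_t¹ = E[U¹(t, τ_h²(t)) | 𝓕_t]`. -/
def W1v (μ : Measure Ω) (𝓕 : Filtration ℝ≥0∞ mΩ) (U : ℝ≥0∞ → ℝ≥0∞ → Ω → ℝ)
    (h : ℝ) (bar : ℕ → Ω → ℝ≥0∞) (t : ℝ≥0∞) (ω : Ω) : ℝ :=
  (μ[fun ω' => U t (gridStrat h bar t ω') ω' | 𝓕 t]) ω

/-- `W_t² = E[U²(ρ_h¹(t), t) | 𝓕_t]`. -/
def W2v (μ : Measure Ω) (𝓕 : Filtration ℝ≥0∞ mΩ) (U : ℝ≥0∞ → ℝ≥0∞ → Ω → ℝ)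
    (h : ℝ) (bar : ℕ → Ω → ℝ≥0∞) (t : ℝ≥0∞) (ω : Ω) : ℝ :=
  (μ[fun ω' => U (gridStrat h bar t ω') t ω' | 𝓕 t]) ω

/-- `μ₁ = inf {t ≥ 0 : v_t¹ ≤ W_t¹ + ε}`. -/
def mu1T (μ : Measure Ω) (𝓕 : Filtration ℝ≥0∞ mΩ) (U : ℝ≥0∞ → ℝ≥0∞ → Ω → ℝ)
    (h ε : ℝ) (bar : ℕ → Ω → ℝ≥0∞) : Ω → ℝ≥0∞ := fun ω =>
  sInf {t | v1v μ 𝓕 U t ω ≤ W1v μ 𝓕 U h bar t ω + ε}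

/-- `μ₂ = inf {t ≥ 0 : v_t² ≤ W_t² + ε}`. -/
def mu2T (μ : Measure Ω) (𝓕 : Filtration ℝ≥0∞ mΩ) (U : ℝ≥0∞ → ℝ≥0∞ → Ω → ℝ)
    (h ε : ℝ) (bar : ℕ → Ω → ℝ≥0∞) : Ω → ℝ≥0∞ := fun ω =>
  sInf {t | v2v μ 𝓕 U t ω ≤ W2v μ 𝓕 U h bar t ω + ε}

/-- `ρ̄(nh)` is a family of `ε`-optimizers for `Y¹_{nh}`:
`E[U(ρ̄(nh), nh) | 𝓕_{nh}] ≥ Y_{nh} − ε`. -/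
def IsOptRho1 (μ : Measure Ω) (𝓕 : Filtration ℝ≥0∞ mΩ) (U : ℝ≥0∞ → ℝ≥0∞ → Ω → ℝ)
    (ε h : ℝ) (bar : ℕ → Ω → ℝ≥0∞) : Prop :=
  ∀ n : ℕ, bar n ∈ STge 𝓕 (fun _ => grid h n) ∧
    ∀ᵐ ω ∂μ, Y1v μ 𝓕 U (grid h n) ω - ε ≤
      (μ[fun ω' => U (bar n ω') (grid h n) ω' | 𝓕 (grid h n)]) ω

/-- `τ̄(nh)` is a family of `ε`-optimizers for `X¹_{nh}`:
`E[U(nh, τ̄(nh)) | 𝓕_{nh}] ≤ X_{nh} + ε`. -/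
def IsOptTau1 (μ : Measure Ω) (𝓕 : Filtration ℝ≥0∞ mΩ) (U : ℝ≥0∞ → ℝ≥0∞ → Ω → ℝ)
    (ε h : ℝ) (bar : ℕ → Ω → ℝ≥0∞) : Prop :=
  ∀ n : ℕ, bar n ∈ STge 𝓕 (fun _ => grid h n) ∧
    ∀ᵐ ω ∂μ, (μ[fun ω' => U (grid h n) (bar n ω') ω' | 𝓕 (grid h n)]) ω ≤
      X1v μ 𝓕 U (grid h n) ω + ε

/-- `ρ̄²(nh)` is a family of `ε`-optimizers for `Y²_{nh}` (an essential infimum). -/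
def IsOptRho2 (μ : Measure Ω) (𝓕 : Filtration ℝ≥0∞ mΩ) (U : ℝ≥0∞ → ℝ≥0∞ → Ω → ℝ)
    (ε h : ℝ) (bar : ℕ → Ω → ℝ≥0∞) : Prop :=
  ∀ n : ℕ, bar n ∈ STge 𝓕 (fun _ => grid h n) ∧
    ∀ᵐ ω ∂μ, (μ[fun ω' => U (bar n ω') (grid h n) ω' | 𝓕 (grid h n)]) ω ≤
      Y2v μ 𝓕 U (grid h n) ω + ε

/-- `τ̄²(nh)` is a family of `ε`-optimizers for `X²_{nh}` (an essential supremum). -/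
def IsOptTau2 (μ : Measure Ω) (𝓕 : Filtration ℝ≥0∞ mΩ) (U : ℝ≥0∞ → ℝ≥0∞ → Ω → ℝ)
    (ε h : ℝ) (bar : ℕ → Ω → ℝ≥0∞) : Prop :=
  ∀ n : ℕ, bar n ∈ STge 𝓕 (fun _ => grid h n) ∧
    ∀ᵐ ω ∂μ, X2v μ 𝓕 U (grid h n) ω - ε ≤
      (μ[fun ω' => U (grid h n) (bar n ω') ω' | 𝓕 (grid h n)]) ω

/-- The standing assumptions on the filtered probability space: `ℙ` charges every point of the
(countable) `Ω`, the filtration is right continuous (usual conditions; completeness is automatic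
since null sets are empty), and `𝓕 = 𝓕_∞ = ⋃_{t<∞} 𝓕_t`. -/
def UsualSetup (μ : Measure Ω) (𝓕 : Filtration ℝ≥0∞ mΩ) : Prop :=
  (∀ ω : Ω, μ {ω} ≠ 0) ∧
  (∀ t : ℝ≥0∞, (𝓕 t : MeasurableSpace Ω) = ⨅ s ∈ Ioi t, (𝓕 s : MeasurableSpace Ω)) ∧
  ((𝓕 ∞ : MeasurableSpace Ω) = mΩ) ∧
  ((⨆ t ∈ Iio (∞ : ℝ≥0∞), (𝓕 t : MeasurableSpace Ω)) = mΩ)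

/-- The standing assumptions on a payoff `U`: boundedness, `𝓕_{s∨t}`-measurability of `U(s,t)`,
and the uniform-continuity modulus `r` (bounded, nondecreasing, `r(0+) = r(0) = 0`).  Note that
the modulus condition, being imposed on all of `[0,∞]`, encodes that the values at `∞` are the
corresponding limits. -/
def PayoffAssumption (𝓕 : Filtration ℝ≥0∞ mΩ) (U : ℝ≥0∞ → ℝ≥0∞ → Ω → ℝ)
    (r : ℝ≥0∞ → ℝ) : Prop :=
  (∃ M : ℝ, ∀ s t ω, |U s t ω| ≤ M) ∧
  (∀ s t : ℝ≥0∞, Measurable[𝓕 (s ⊔ t)] (U s t)) ∧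
  Monotone r ∧ (∀ x, 0 ≤ r x) ∧ (∃ C : ℝ, ∀ x, r x ≤ C) ∧ r 0 = 0 ∧
  Tendsto r (𝓝[>] (0 : ℝ≥0∞)) (𝓝 (0 : ℝ)) ∧
  (∀ s t s' t' : ℝ≥0∞, ∀ ω, |U s t ω - U s' t' ω| ≤ r (dd s s' + dd t t'))

/-- The values of `U` at `∞` are the limits of the values at finite times. -/
def LimitsAtInfty (U : ℝ≥0∞ → ℝ≥0∞ → Ω → ℝ) : Prop :=
  (∀ s ω, Tendsto (fun b => U s b ω) (𝓝[<] (∞ : ℝ≥0∞)) (𝓝 (U s ∞ ω))) ∧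
  (∀ t ω, Tendsto (fun a => U a t ω) (𝓝[<] (∞ : ℝ≥0∞)) (𝓝 (U ∞ t ω))) ∧
  (∀ ω, Tendsto (fun p : ℝ≥0∞ × ℝ≥0∞ => U p.1 p.2 ω)
    ((𝓝[<] (∞ : ℝ≥0∞)) ×ˢ (𝓝[<] (∞ : ℝ≥0∞))) (𝓝 (U ∞ ∞ ω)))

/-- `ess inf_{σ ∈ 𝒯_v} E[U(s,σ) | 𝓕_v]` for a stopping time `v`. -/
def XatST (μ : Measure Ω) (𝓕 : Filtration ℝ≥0∞ mΩ) (U : ℝ≥0∞ → ℝ≥0∞ → Ω → ℝ)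
    {v : Ω → ℝ≥0∞} (hv : IsStoppingTime 𝓕 (fun ω => (v ω : WithTop ℝ≥0∞))) (s : ℝ≥0∞) (ω : Ω) : ℝ :=
  ⨅ σ : STge 𝓕 v, (μ[fun ω' => U s (σ.1 ω') ω' | hv.measurableSpace]) ω

/-- `X̃_v(s) = ess inf_{σ ∈ 𝒯_v} E[U(s,σ) | 𝓕_v]` for a deterministic time `v`. -/
def Xat (μ : Measure Ω) (𝓕 : Filtration ℝ≥0∞ mΩ) (U : ℝ≥0∞ → ℝ≥0∞ → Ω → ℝ)
    (v s : ℝ≥0∞) (ω : Ω) : ℝ :=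
  ⨅ σ : STge 𝓕 (fun _ => v), (μ[fun ω' => U s (σ.1 ω') ω' | 𝓕 v]) ω

/-- `ρ₀* = μ₁ 1_{μ₁ ≤ μ₂} + ρ²_{μ₂+δ} 1_{μ₁ > μ₂}`. -/
def rhoStar0 (m1 m2 rsad2 : Ω → ℝ≥0∞) : Ω → ℝ≥0∞ := fun ω =>
  if m1 ω ≤ m2 ω then m1 ω else rsad2 ω

/-- `ρ₁*(t) = ρ_h²(t)` if `t ≥ μ₁ ∧ μ₂ + δ` and `μ₁ > μ₂`, else `ρ_h¹(t)`. -/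
def rhoStar1 (m1 m2 : Ω → ℝ≥0∞) (δ : ℝ) (φ1 φ2 : ℝ≥0∞ → Ω → ℝ≥0∞) :
    ℝ≥0∞ → Ω → ℝ≥0∞ := fun t ω =>
  if (m1 ω ⊓ m2 ω) + ENNReal.ofReal δ ≤ t ∧ m2 ω < m1 ω then φ2 t ω else φ1 t ω

/-- `τ₀* = τ¹_{μ₁+δ} 1_{μ₁ ≤ μ₂} + μ₂ 1_{μ₁ > μ₂}`. -/
def tauStar0 (m1 m2 tsad1 : Ω → ℝ≥0∞) : Ω → ℝ≥0∞ := fun ω =>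
  if m1 ω ≤ m2 ω then tsad1 ω else m2 ω

/-- `τ₁*(t) = τ_h¹(t)` if `t ≥ μ₁ ∧ μ₂ + δ` and `μ₁ ≤ μ₂`, else `τ_h²(t)`. -/
def tauStar1 (m1 m2 : Ω → ℝ≥0∞) (δ : ℝ) (ψ1 ψ2 : ℝ≥0∞ → Ω → ℝ≥0∞) :
    ℝ≥0∞ → Ω → ℝ≥0∞ := fun t ω =>
  if (m1 ω ⊓ m2 ω) + ENNReal.ofReal δ ≤ t ∧ m1 ω ≤ m2 ω then ψ1 t ω else ψ2 t ω

set_option linter.unusedSectionVars false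

theorem ae_all' {μ : Measure Ω} (hμ : ∀ ω : Ω, μ {ω} ≠ 0) {p : Ω → Prop}
    (h : ∀ᵐ ω ∂μ, p ω) : ∀ ω, p ω := by
  intro ω
  by_contra hc
  have hnull : μ {ω' | ¬ p ω'} = 0 := h
  exact hμ ω (measure_mono_null (fun x hx => by
    simp only [Set.mem_singleton_iff] at hx
    subst hx
    exact hc) hnull)

/-- The atom of a σ-algebra containing `ω`. -/
def atom (m : MeasurableSpace Ω) (ω : Ω) : Set Ω :=
  {ω' | ∀ A : Set Ω, MeasurableSet[m] A → (ω ∈ A ↔ ω' ∈ A)}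

theorem mem_atom_self (m : MeasurableSpace Ω) (ω : Ω) : ω ∈ atom m ω := fun _ _ => Iff.rfl

theorem atom_subset {m : MeasurableSpace Ω} {ω : Ω} {A : Set Ω} (hA : MeasurableSet[m] A)
    (hω : ω ∈ A) : atom m ω ⊆ A := fun _ h => (h A hA).mp hω

theorem not_mem_of_mem_atom {m : MeasurableSpace Ω} {ω ω' : Ω} {A : Set Ω}
    (hA : MeasurableSet[m] A) (hω : ω ∉ A) (h : ω' ∈ atom m ω) : ω' ∉ A :=
  fun hω' => hω ((h A hA).mpr hω')

theorem atom_antitone {m m' : MeasurableSpace Ω} (h : m ≤ m') (ω : Ω) :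
    atom m' ω ⊆ atom m ω := fun ω' hω' A hA => hω' A (h A hA)

theorem measurableSet_atom [Countable Ω] (m : MeasurableSpace Ω) (ω : Ω) :
    MeasurableSet[m] (atom m ω) := by
  have h : ∀ ω' : Ω, ∃ B : Set Ω, MeasurableSet[m] B ∧ (ω' ∉ atom m ω → ω' ∈ B) ∧
      ∀ x ∈ atom m ω, x ∉ B := by
    intro ω'
    by_cases hω' : ω' ∈ atom m ω
    · exact ⟨∅, MeasurableSet.empty, fun hc => absurd hω' hc, fun x _ hc => hc⟩
    · simp only [atom, Set.mem_setOf_eq, not_forall] at hω'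
      obtain ⟨A, hA, hiff⟩ := hω'
      by_cases hωA : ω ∈ A
      · have hω'A : ω' ∉ A := fun hc => hiff ⟨fun _ => hc, fun _ => hωA⟩
        exact ⟨Aᶜ, hA.compl, fun _ => hω'A, fun x hx => by
          simp only [Set.mem_compl_iff, not_not]
          exact atom_subset hA hωA hx⟩
      · have hω'A : ω' ∈ A := by
          by_contra hc
          exact hiff ⟨fun h1 => absurd h1 hωA, fun h1 => absurd h1 hc⟩
        exact ⟨A, hA, fun _ => hω'A, fun x hx => not_mem_of_mem_atom hA hωA hx⟩
  choose B hBm hBmem hBdis using h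
  have hrepr : atom m ω = (⋃ ω' : Ω, B ω')ᶜ := by
    ext x
    simp only [Set.mem_compl_iff, Set.mem_iUnion, not_exists]
    constructor
    · intro hx ω' hxB
      exact hBdis ω' x hx hxB
    · intro hx
      by_contra hc
      exact hx x (hBmem x hc)
  rw [hrepr]
  exact (MeasurableSet.iUnion hBm).compl

theorem measurable_of_atoms [Countable Ω] {m : MeasurableSpace Ω} {β : Type*}
    [MeasurableSpace β] {f : Ω → β} (h : ∀ ω ω', ω' ∈ atom m ω → f ω' = f ω) :
    Measurable[m] f := by
  intro S _
  have hrepr : f ⁻¹' S = ⋃ ω' : (f ⁻¹' S : Set Ω), atom m ω'.1 := by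
    ext x
    simp only [Set.mem_preimage, Set.mem_iUnion]
    constructor
    · intro hx
      exact ⟨⟨x, hx⟩, mem_atom_self m x⟩
    · rintro ⟨⟨ω', hω'⟩, hx⟩
      have := h ω' x hx
      simp only [Set.mem_preimage] at hω'
      rw [this]
      exact hω'
  rw [hrepr]
  exact MeasurableSet.iUnion fun ω' => measurableSet_atom m ω'.1

theorem eq_on_atom {m : MeasurableSpace Ω} {β : Type*} [MeasurableSpace β]
    [MeasurableSingletonClass β] {f : Ω → β} (hf : Measurable[m] f) {ω ω' : Ω}
    (h : ω' ∈ atom m ω) : f ω' = f ω :=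
  (h (f ⁻¹' {f ω}) (hf (measurableSet_singleton _))).mp rfl

theorem atom_congr {m₁ m₂ : MeasurableSpace Ω} {ω : Ω} {E : Set Ω} (hωE : ω ∈ E)
    (h1 : ∀ A, MeasurableSet[m₂] A → MeasurableSet[m₁] (A ∩ E))
    (h2 : ∀ A, MeasurableSet[m₁] A → MeasurableSet[m₂] (A ∩ E)) :
    atom m₁ ω = atom m₂ ω := by
  have key : ∀ (ma mb : MeasurableSpace Ω),
      (∀ A, MeasurableSet[mb] A → MeasurableSet[ma] (A ∩ E)) →
      ∀ ω' ∈ atom ma ω, ω' ∈ atom mb ω := by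
    intro ma mb htr ω' hω' A hA
    constructor
    · intro hωA
      exact ((hω' _ (htr A hA)).mp ⟨hωA, hωE⟩).1
    · intro hω'A
      by_contra hωA
      exact ((hω' _ (htr Aᶜ hA.compl)).mp ⟨hωA, hωE⟩).1 hω'A
  exact Set.Subset.antisymm (fun ω' h => key m₁ m₂ h1 ω' h) (fun ω' h => key m₂ m₁ h2 ω' h)


section Condexp

variable {μ : Measure Ω} [IsProbabilityMeasure μ]

theorem condexp_mul_meas [Countable Ω] {m : MeasurableSpace Ω}
    (hm : m ≤ mΩ) {f : Ω → ℝ} (hf : Integrable f μ) (ω : Ω) :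
    (μ[f|m]) ω * (μ (atom m ω)).toReal = ∫ ω' in atom m ω, f ω' ∂μ := by
  letI : MeasurableSpace Ω := mΩ

  have hAm := measurableSet_atom m ω
  have hA : MeasurableSet[mΩ] (atom m ω) := hm _ hAm
  have h1 : ∫ ω' in atom m ω, (μ[f|m]) ω' ∂μ = ∫ ω' in atom m ω, f ω' ∂μ :=
    setIntegral_condExp hm hf hAm
  have h2 : Set.EqOn (μ[f|m]) (fun _ => (μ[f|m]) ω) (atom m ω) := fun ω' h =>
    eq_on_atom (stronglyMeasurable_condExp.measurable) h
  rw [← h1, setIntegral_congr_fun (μ := μ) hA h2, setIntegral_const, smul_eq_mul, mul_comm]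
  rfl

theorem measure_atom_toReal_ne_zero [Countable Ω] (hμ : ∀ ω : Ω, μ {ω} ≠ 0)
    (m : MeasurableSpace Ω) (ω : Ω) : (μ (atom m ω)).toReal ≠ 0 := by
  refine ENNReal.toReal_ne_zero.mpr ⟨fun h0 => hμ ω ?_, measure_ne_top μ _⟩
  exact le_antisymm (h0 ▸ measure_mono (Set.singleton_subset_iff.mpr (mem_atom_self m ω)))
    zero_le

theorem condexp_eq_condexp_atom [Countable Ω] (hμ : ∀ ω : Ω, μ {ω} ≠ 0)
    {m₁ m₂ : MeasurableSpace Ω} (h1 : m₁ ≤ mΩ) (h2 : m₂ ≤ mΩ)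
    {f g : Ω → ℝ} (hf : Integrable f μ) (hg : Integrable g μ) {ω : Ω}
    (hatom : atom m₁ ω = atom m₂ ω) (hfg : ∀ ω' ∈ atom m₁ ω, f ω' = g ω') :
    (μ[f|m₁]) ω = (μ[g|m₂]) ω := by
  letI : MeasurableSpace Ω := mΩ

  have e1 := condexp_mul_meas (mΩ := mΩ) h1 hf ω
  have e2 := condexp_mul_meas (mΩ := mΩ) h2 hg ω
  rw [← hatom] at e2
  have hI : ∫ ω' in atom m₁ ω, f ω' ∂μ = ∫ ω' in atom m₁ ω, g ω' ∂μ :=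
    setIntegral_congr_fun (μ := μ) (h1 _ (measurableSet_atom m₁ ω)) hfg
  have := e1.trans (hI.trans e2.symm)
  exact mul_right_cancel₀ (measure_atom_toReal_ne_zero hμ m₁ ω) this

theorem abs_condexp_le (hμ : ∀ ω : Ω, μ {ω} ≠ 0) {m : MeasurableSpace Ω} (hm : m ≤ mΩ)
    {f : Ω → ℝ} {M : ℝ} (hf : Integrable f μ) (hbd : ∀ ω, |f ω| ≤ M) (ω : Ω) :
    |(μ[f|m]) ω| ≤ M := by
  letI : MeasurableSpace Ω := mΩ

  have hup : μ[f|m] ≤ᵐ[μ] μ[fun _ => M|m] :=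
    condExp_mono hf (integrable_const (μ := μ) M) (ae_of_all μ fun ω => (abs_le.mp (hbd ω)).2)
  have hlo : μ[fun _ => (-M : ℝ)|m] ≤ᵐ[μ] μ[f|m] :=
    condExp_mono (integrable_const (μ := μ) (-M)) hf (ae_of_all μ fun ω => (abs_le.mp (hbd ω)).1)
  rw [condExp_const hm] at hup
  rw [condExp_const hm] at hlo
  have h1 := ae_all' hμ hup ω
  have h2 := ae_all' hμ hlo ω
  exact abs_le.mpr ⟨h2, h1⟩

theorem condexp_le_condexp_add_const (hμ : ∀ ω : Ω, μ {ω} ≠ 0) {m : MeasurableSpace Ω}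
    (hm : m ≤ mΩ) {f g : Ω → ℝ} {c : ℝ} (hf : Integrable f μ) (hg : Integrable g μ)
    (hfg : ∀ ω, f ω ≤ g ω + c) (ω : Ω) : (μ[f|m]) ω ≤ (μ[g|m]) ω + c := by
  letI : MeasurableSpace Ω := mΩ

  have h1 : μ[f|m] ≤ᵐ[μ] μ[fun ω' => g ω' + c|m] :=
    condExp_mono hf (hg.add (integrable_const (μ := μ) c)) (ae_of_all μ hfg)
  have h2 : μ[fun ω' => g ω' + c|m] =ᵐ[μ] μ[g|m] + μ[fun _ => c|m] :=
    condExp_add hg (integrable_const (μ := μ) c) m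
  rw [condExp_const hm] at h2
  have h3 := ae_all' hμ h1 ω
  have h4 := ae_all' hμ h2 ω
  rw [h4] at h3
  simpa using h3

theorem condexp_tower_apply (hμ : ∀ ω : Ω, μ {ω} ≠ 0) {m₁ m₂ : MeasurableSpace Ω}
    (h12 : m₁ ≤ m₂) (h2 : m₂ ≤ mΩ) (f : Ω → ℝ) (ω : Ω) :
    (μ[μ[f|m₂]|m₁]) ω = (μ[f|m₁]) ω := by
  letI : MeasurableSpace Ω := mΩ
  exact ae_all' hμ (condExp_condExp_of_le h12 h2) ω

theorem condexp_neg_apply (hμ : ∀ ω : Ω, μ {ω} ≠ 0) {m : MeasurableSpace Ω}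
    (f : Ω → ℝ) (ω : Ω) : (μ[fun ω' => -f ω'|m]) ω = -(μ[f|m]) ω := by
  letI : MeasurableSpace Ω := mΩ
  exact ae_all' hμ (condExp_neg f m) ω

theorem integrable_of_bdd [Countable Ω] {f : Ω → ℝ} {M : ℝ}
    (hmeas : Measurable f) (hbd : ∀ ω, |f ω| ≤ M) : Integrable f μ :=
  (integrable_const M).mono' hmeas.aestronglyMeasurable
    (ae_of_all μ fun ω => by simpa [Real.norm_eq_abs] using hbd ω)

end Condexp


section Stopping

variable {𝓕 : Filtration ℝ≥0∞ mΩ} {τ a b : Ω → ℝ≥0∞}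

theorem st_le_set (hτ : IsStoppingTime 𝓕 (fun ω => (τ ω : WithTop ℝ≥0∞))) (t : ℝ≥0∞) :
    MeasurableSet[𝓕 t] {ω | τ ω ≤ t} := by
  have h := hτ.measurableSet_le t
  simpa using h

theorem st_eq_set (hτ : IsStoppingTime 𝓕 (fun ω => (τ ω : WithTop ℝ≥0∞))) (t : ℝ≥0∞) :
    MeasurableSet[𝓕 t] {ω | τ ω = t} := by
  have h := hτ.measurableSet_eq t
  simpa using h

theorem st_min (ha : IsStoppingTime 𝓕 (fun ω => (a ω : WithTop ℝ≥0∞)))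
    (hb : IsStoppingTime 𝓕 (fun ω => (b ω : WithTop ℝ≥0∞))) :
    IsStoppingTime 𝓕 (fun ω => ((min (a ω) (b ω) : ℝ≥0∞) : WithTop ℝ≥0∞)) :=
  IsStoppingTime.min ha hb

theorem st_ms_le (hτ : IsStoppingTime 𝓕 (fun ω₀ => (τ ω₀ : WithTop ℝ≥0∞))) : hτ.measurableSpace ≤ mΩ := by
  exact hτ.measurableSpace_le

theorem st_inter_eq_mem (hτ : IsStoppingTime 𝓕 (fun ω₀ => (τ ω₀ : WithTop ℝ≥0∞))) (t : ℝ≥0∞) {A : Set Ω}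
    (hA : MeasurableSet[hτ.measurableSpace] A) :
    MeasurableSet[𝓕 t] (A ∩ {ω | τ ω = t}) := by
  have h1 : MeasurableSet[𝓕 t] (A ∩ {ω | τ ω ≤ t}) := by
    have h := ((IsStoppingTime.measurableSet hτ A).mp hA).2 t
    simpa using h
  have h2 : MeasurableSet[𝓕 t] {ω | τ ω = t} := st_eq_set hτ t
  have h3 : A ∩ {ω | τ ω = t} = (A ∩ {ω | τ ω ≤ t}) ∩ {ω | τ ω = t} := by
    ext x
    simp only [Set.mem_inter_iff, Set.mem_setOf_eq]
    exact ⟨fun ⟨hx1, hx2⟩ => ⟨⟨hx1, hx2.le⟩, hx2⟩, fun ⟨⟨hx1, _⟩, hx2⟩ => ⟨hx1, hx2⟩⟩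
  rw [h3]
  exact h1.inter h2

theorem mem_st_of_inter_eq (hτ : IsStoppingTime 𝓕 (fun ω₀ => (τ ω₀ : WithTop ℝ≥0∞))) (t : ℝ≥0∞) {B : Set Ω}
    (hB : MeasurableSet[𝓕 t] B) :
    MeasurableSet[hτ.measurableSpace] (B ∩ {ω | τ ω = t}) := by
  rw [IsStoppingTime.measurableSet]
  refine ⟨le_iSup (fun t => (𝓕 t : MeasurableSpace Ω)) t _ (hB.inter (st_eq_set hτ t)), fun u => ?_⟩
  have hcoe : {ω | ((τ ω : ℝ≥0∞) : WithTop ℝ≥0∞) ≤ (u : WithTop ℝ≥0∞)} = {ω | τ ω ≤ u} := by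
    ext x
    simp
  show MeasurableSet[𝓕 u] (B ∩ {ω | τ ω = t} ∩ {ω | ((τ ω : ℝ≥0∞) : WithTop ℝ≥0∞) ≤ (u : WithTop ℝ≥0∞)})
  rw [hcoe]
  by_cases htu : t ≤ u
  · have h3 : B ∩ {ω | τ ω = t} ∩ {ω | τ ω ≤ u} = B ∩ {ω | τ ω = t} := by
      ext x
      simp only [Set.mem_inter_iff, Set.mem_setOf_eq]
      exact ⟨fun ⟨hx, _⟩ => hx, fun hx => ⟨hx, hx.2 ▸ htu⟩⟩
    rw [h3]
    exact (𝓕.mono htu _ hB).inter (𝓕.mono htu _ (st_eq_set hτ t))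
  · have h3 : B ∩ {ω | τ ω = t} ∩ {ω | τ ω ≤ u} = ∅ := by
      ext x
      simp only [Set.mem_inter_iff, Set.mem_setOf_eq, Set.mem_empty_iff_false, iff_false,
        not_and]
      rintro ⟨_, hx⟩ hxu
      exact htu (hx ▸ hxu)
    rw [h3]
    exact @MeasurableSet.empty Ω (𝓕 u)

theorem atom_st (hτ : IsStoppingTime 𝓕 (fun ω₀ => (τ ω₀ : WithTop ℝ≥0∞))) (ω : Ω) :
    atom hτ.measurableSpace ω = atom (𝓕 (τ ω) : MeasurableSpace Ω) ω := by
  refine atom_congr (E := {ω' | τ ω' = τ ω}) rfl ?_ ?_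
  · exact fun A hA => mem_st_of_inter_eq hτ (τ ω) hA
  · exact fun A hA => st_inter_eq_mem hτ (τ ω) hA

theorem ms_min_comm (ha : IsStoppingTime 𝓕 (fun ω₀ => (a ω₀ : WithTop ℝ≥0∞))) (hb : IsStoppingTime 𝓕 (fun ω₀ => (b ω₀ : WithTop ℝ≥0∞))) :
    (st_min ha hb).measurableSpace = (st_min hb ha).measurableSpace := by
  show (IsStoppingTime.min ha hb).measurableSpace = (IsStoppingTime.min hb ha).measurableSpace
  rw [IsStoppingTime.measurableSpace_min ha hb, IsStoppingTime.measurableSpace_min hb ha,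
    inf_comm]

theorem measurableSet_lt_pair (ha : IsStoppingTime 𝓕 (fun ω₀ => (a ω₀ : WithTop ℝ≥0∞))) (hb : IsStoppingTime 𝓕 (fun ω₀ => (b ω₀ : WithTop ℝ≥0∞))) :
    MeasurableSet[(st_min ha hb).measurableSpace] {ω | a ω < b ω} := by
  have h1 : MeasurableSet[ha.measurableSpace] {ω | a ω < b ω} := by
    have h0 : MeasurableSet[ha.measurableSpace]
        {ω | ((b ω : ℝ≥0∞) : WithTop ℝ≥0∞) ≤ (a ω : WithTop ℝ≥0∞)}ᶜ :=
      (IsStoppingTime.measurableSet_stopping_time_le hb ha).compl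
    have he : {ω | ((b ω : ℝ≥0∞) : WithTop ℝ≥0∞) ≤ (a ω : WithTop ℝ≥0∞)}ᶜ = {ω | a ω < b ω} := by
      ext x
      simp only [Set.mem_compl_iff, Set.mem_setOf_eq, not_le, WithTop.coe_lt_coe]
    rwa [he] at h0
  have h2 : {ω | a ω < b ω} =
      {ω | a ω < b ω} ∩ {ω | ((a ω : ℝ≥0∞) : WithTop ℝ≥0∞) ≤ (b ω : WithTop ℝ≥0∞)} := by
    ext x
    simp only [Set.mem_inter_iff, Set.mem_setOf_eq, WithTop.coe_le_coe]
    exact ⟨fun h => ⟨h, h.le⟩, fun h => h.1⟩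
  rw [h2]
  exact IsStoppingTime.measurableSet_inter_le ha hb _ h1

/-- Specification of the atom of `𝓕 (min (a ω) (b ω))` at `ω`. -/
theorem atom_min_spec (ha : IsStoppingTime 𝓕 (fun ω₀ => (a ω₀ : WithTop ℝ≥0∞))) (hb : IsStoppingTime 𝓕 (fun ω₀ => (b ω₀ : WithTop ℝ≥0∞))) {ω ω' : Ω}
    (h : ω' ∈ atom (𝓕 (min (a ω) (b ω)) : MeasurableSpace Ω) ω) :
    (a ω < b ω → a ω' = a ω ∧ a ω' < b ω') ∧
    (b ω < a ω → b ω' = b ω ∧ b ω' < a ω') ∧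
    (a ω = b ω → a ω' = a ω ∧ b ω' = a ω) := by
  have hc : IsStoppingTime 𝓕 (fun ω => ((min (a ω) (b ω) : ℝ≥0∞) : WithTop ℝ≥0∞)) :=
    st_min ha hb
  have hE1 : MeasurableSet[𝓕 (min (a ω) (b ω))]
      {ω' | min (a ω') (b ω') = min (a ω) (b ω)} := st_eq_set hc _
  have hc' : min (a ω') (b ω') = min (a ω) (b ω) := atom_subset hE1 rfl h
  have Hlt : MeasurableSet[𝓕 (min (a ω) (b ω))]
      ({ω' | a ω' < b ω'} ∩ {ω' | min (a ω') (b ω') = min (a ω) (b ω)}) :=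
    st_inter_eq_mem hc _ (measurableSet_lt_pair ha hb)
  have Hgt : MeasurableSet[𝓕 (min (a ω) (b ω))]
      ({ω' | b ω' < a ω'} ∩ {ω' | min (a ω') (b ω') = min (a ω) (b ω)}) := by
    refine st_inter_eq_mem hc _ ?_
    rw [ms_min_comm ha hb]
    exact measurableSet_lt_pair hb ha
  refine ⟨?_, ?_, ?_⟩
  · intro hab
    have hx : ω' ∈ {ω' | a ω' < b ω'} ∩ {ω' | min (a ω') (b ω') = min (a ω) (b ω)} :=
      atom_subset Hlt ⟨hab, rfl⟩ h
    have hxl : a ω' < b ω' := hx.1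
    refine ⟨?_, hxl⟩
    have hx2 : a ω' ⊓ b ω' = a ω ⊓ b ω := hx.2
    rw [min_eq_left hxl.le, min_eq_left hab.le] at hx2
    exact hx2
  · intro hab
    have hx : ω' ∈ {ω' | b ω' < a ω'} ∩ {ω' | min (a ω') (b ω') = min (a ω) (b ω)} :=
      atom_subset Hgt ⟨hab, rfl⟩ h
    have hxl : b ω' < a ω' := hx.1
    refine ⟨?_, hxl⟩
    have hx2 : a ω' ⊓ b ω' = a ω ⊓ b ω := hx.2
    rw [min_eq_right hxl.le, min_eq_right hab.le] at hx2
    exact hx2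
  · intro hab
    have hx1 : ω' ∉ {ω' | a ω' < b ω'} ∩ {ω' | min (a ω') (b ω') = min (a ω) (b ω)} :=
      not_mem_of_mem_atom Hlt (fun hx => absurd hab hx.1.ne) h
    have hx2 : ω' ∉ {ω' | b ω' < a ω'} ∩ {ω' | min (a ω') (b ω') = min (a ω) (b ω)} :=
      not_mem_of_mem_atom Hgt (fun hx => absurd hab hx.1.ne') h
    have h1 : ¬ a ω' < b ω' := fun hx => hx1 ⟨hx, hc'⟩
    have h2 : ¬ b ω' < a ω' := fun hx => hx2 ⟨hx, hc'⟩
    have heq : a ω' = b ω' := le_antisymm (not_lt.mp h2) (not_lt.mp h1)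
    have : a ω' = min (a ω) (b ω) := by rw [← hc', min_eq_left heq.le]
    rw [← hab, min_self] at this
    exact ⟨this, heq ▸ this⟩

theorem condexp_min_apply [Countable Ω] {μ : Measure Ω} [IsProbabilityMeasure μ]
    (hμ : ∀ ω : Ω, μ {ω} ≠ 0) (ha : IsStoppingTime 𝓕 (fun ω₀ => (a ω₀ : WithTop ℝ≥0∞))) (hb : IsStoppingTime 𝓕 (fun ω₀ => (b ω₀ : WithTop ℝ≥0∞)))
    {P Q : Ω → ℝ} (hP : Integrable P μ) (hQ : Integrable Q μ) (ω : Ω)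
    (hPQ : ∀ ω' ∈ atom (𝓕 (min (a ω) (b ω)) : MeasurableSpace Ω) ω, P ω' = Q ω') :
    (μ[P|(st_min ha hb).measurableSpace]) ω = (μ[Q|𝓕 (min (a ω) (b ω))]) ω := by
  have hatom : atom (st_min ha hb).measurableSpace ω
      = atom (𝓕 (min (a ω) (b ω)) : MeasurableSpace Ω) ω := atom_st (st_min ha hb) ω
  refine condexp_eq_condexp_atom hμ (st_ms_le (st_min ha hb)) (𝓕.le _) hP hQ hatom ?_
  rw [hatom]
  exact hPQ

theorem st_eq_on_atom (hτ : IsStoppingTime 𝓕 (fun ω₀ => (τ ω₀ : WithTop ℝ≥0∞))) {ω ω' : Ω} (h : ω' ∈ atom mΩ ω) :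
    τ ω' = τ ω := by
  have key : ∀ v, τ ω ≤ v ↔ τ ω' ≤ v := fun v => h {x | τ x ≤ v} (𝓕.le v _ (st_le_set hτ v))
  exact le_antisymm ((key (τ ω)).mp le_rfl) ((key (τ ω')).mpr le_rfl)

end Stopping


section Game

variable {𝓕 : Filtration ℝ≥0∞ mΩ} {U : ℝ≥0∞ → ℝ≥0∞ → Ω → ℝ} {M : ℝ}
  {a b : Ω → ℝ≥0∞}

theorem measurable_U_comp [Countable Ω] (hUm : ∀ s t, Measurable[𝓕 (s ⊔ t)] (U s t))
    (hA : ∀ ω ω', ω' ∈ atom mΩ ω → a ω' = a ω)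
    (hB : ∀ ω ω', ω' ∈ atom mΩ ω → b ω' = b ω) :
    Measurable fun ω => U (a ω) (b ω) ω := by
  apply measurable_of_atoms (m := mΩ)
  intro ω ω' h
  rw [hA ω ω' h, hB ω ω' h]
  exact eq_on_atom (Measurable.le (𝓕.le _) (hUm (a ω) (b ω))) h

theorem integrable_U_comp [Countable Ω] {μ : Measure Ω} [IsProbabilityMeasure μ]
    (hUm : ∀ s t, Measurable[𝓕 (s ⊔ t)] (U s t)) (hM : ∀ s t ω, |U s t ω| ≤ M)
    (hA : ∀ ω ω', ω' ∈ atom mΩ ω → a ω' = a ω)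
    (hB : ∀ ω ω', ω' ∈ atom mΩ ω → b ω' = b ω) :
    Integrable (fun ω => U (a ω) (b ω) ω) μ :=
  integrable_of_bdd (measurable_U_comp hUm hA hB) (fun ω => hM _ _ ω)

theorem st_coa {τ : Ω → ℝ≥0∞} (hτ : IsStoppingTime 𝓕 (fun ω₀ => (τ ω₀ : WithTop ℝ≥0∞))) :
    ∀ ω ω', ω' ∈ atom mΩ ω → τ ω' = τ ω := fun _ _ h => st_eq_on_atom hτ h

theorem const_coa (t : ℝ≥0∞) :
    ∀ ω ω' : Ω, ω' ∈ atom mΩ ω → (fun _ : Ω => t) ω' = (fun _ : Ω => t) ω := fun _ _ _ => rfl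

theorem play_coa {ρ τp : (Ω → ℝ≥0∞) × (ℝ≥0∞ → Ω → ℝ≥0∞)} (hρ : IsStrategy 𝓕 ρ)
    (hτ : IsStoppingTime 𝓕 (fun ω₀ => (τp.1 ω₀ : WithTop ℝ≥0∞))) :
    ∀ ω ω', ω' ∈ atom mΩ ω → play ρ τp ω' = play ρ τp ω := by
  intro ω ω' hm
  have h1 := st_eq_on_atom hρ.1 hm
  have h2 := st_eq_on_atom hτ hm
  unfold play
  rw [h1, h2]
  by_cases hle : ρ.1 ω ≤ τp.1 ω
  · simp [hle]
  · simp only [if_neg hle]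
    have hne : τp.1 ω ≠ ∞ := fun hc => hle (hc ▸ le_top)
    exact st_eq_on_atom ((hρ.2.2 _ hne).1 : IsStoppingTime 𝓕 (fun ω₀ => ((ρ.2 (τp.1 ω)) ω₀ : WithTop ℝ≥0∞))) hm

instance STge_nonempty (𝓕 : Filtration ℝ≥0∞ mΩ) (v : Ω → ℝ≥0∞) : Nonempty (STge 𝓕 v) :=
  ⟨⟨fun _ => ⊤, isStoppingTime_const 𝓕 ⊤, fun _ => le_top⟩⟩

variable {μ : Measure Ω} [IsProbabilityMeasure μ]

theorem X1v_le_elem [Countable Ω] (hμ : ∀ ω : Ω, μ {ω} ≠ 0)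
    (hUm : ∀ s t, Measurable[𝓕 (s ⊔ t)] (U s t)) (hM : ∀ s t ω, |U s t ω| ≤ M)
    {s : ℝ≥0∞} {σ' : Ω → ℝ≥0∞} (hσ' : σ' ∈ STge 𝓕 (fun _ => s)) (ω : Ω) :
    X1v μ 𝓕 U s ω ≤ (μ[fun ω' => U s (σ' ω') ω'|𝓕 s]) ω := by
  have hbdd : BddBelow (Set.range fun σ'' : STge 𝓕 (fun _ => s) =>
      (μ[fun ω' => U s (σ''.1 ω') ω'|𝓕 s]) ω) := by
    refine ⟨-M, ?_⟩
    rintro x ⟨σ'', rfl⟩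
    have hb := abs_condexp_le hμ (𝓕.le s)
      (integrable_U_comp hUm hM (const_coa s) (st_coa σ''.2.1)) (fun ω => hM _ _ ω) ω
    linarith [(abs_le.mp hb).1]
  exact ciInf_le hbdd ⟨σ', hσ'⟩

theorem elem_le_Y1v [Countable Ω] (hμ : ∀ ω : Ω, μ {ω} ≠ 0)
    (hUm : ∀ s t, Measurable[𝓕 (s ⊔ t)] (U s t)) (hM : ∀ s t ω, |U s t ω| ≤ M)
    {s : ℝ≥0∞} {σ' : Ω → ℝ≥0∞} (hσ' : σ' ∈ STge 𝓕 (fun _ => s)) (ω : Ω) :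
    (μ[fun ω' => U (σ' ω') s ω'|𝓕 s]) ω ≤ Y1v μ 𝓕 U s ω := by
  have hbdd : BddAbove (Set.range fun σ'' : STge 𝓕 (fun _ => s) =>
      (μ[fun ω' => U (σ''.1 ω') s ω'|𝓕 s]) ω) := by
    refine ⟨M, ?_⟩
    rintro x ⟨σ'', rfl⟩
    have hb := abs_condexp_le hμ (𝓕.le s)
      (integrable_U_comp hUm hM (st_coa σ''.2.1) (const_coa s)) (fun ω => hM _ _ ω) ω
    exact (abs_le.mp hb).2
  exact le_ciSup hbdd ⟨σ', hσ'⟩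

theorem abs_X1v_le [Countable Ω] (hμ : ∀ ω : Ω, μ {ω} ≠ 0)
    (hUm : ∀ s t, Measurable[𝓕 (s ⊔ t)] (U s t)) (hM : ∀ s t ω, |U s t ω| ≤ M)
    (s : ℝ≥0∞) (ω : Ω) : |X1v μ 𝓕 U s ω| ≤ M := by
  rw [abs_le]
  constructor
  · exact le_ciInf fun σ'' => by
      have hb := abs_condexp_le hμ (𝓕.le s)
        (integrable_U_comp hUm hM (const_coa s) (st_coa σ''.2.1)) (fun ω => hM _ _ ω) ω
      linarith [(abs_le.mp hb).1]
  · have htop : (fun _ : Ω => (⊤ : ℝ≥0∞)) ∈ STge 𝓕 (fun _ => s) :=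
      ⟨isStoppingTime_const 𝓕 ⊤, fun _ => le_top⟩
    refine le_trans (X1v_le_elem hμ hUm hM htop ω) ?_
    have hb := abs_condexp_le hμ (𝓕.le s)
      (integrable_U_comp hUm hM (const_coa s) (const_coa ⊤)) (fun ω => hM _ _ ω) ω
    exact (abs_le.mp hb).2

theorem abs_Y1v_le [Countable Ω] (hμ : ∀ ω : Ω, μ {ω} ≠ 0)
    (hUm : ∀ s t, Measurable[𝓕 (s ⊔ t)] (U s t)) (hM : ∀ s t ω, |U s t ω| ≤ M)
    (s : ℝ≥0∞) (ω : Ω) : |Y1v μ 𝓕 U s ω| ≤ M := by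
  rw [abs_le]
  constructor
  · have htop : (fun _ : Ω => (⊤ : ℝ≥0∞)) ∈ STge 𝓕 (fun _ => s) :=
      ⟨isStoppingTime_const 𝓕 ⊤, fun _ => le_top⟩
    refine le_trans ?_ (elem_le_Y1v hμ hUm hM htop ω)
    have hb := abs_condexp_le hμ (𝓕.le s)
      (integrable_U_comp hUm hM (const_coa ⊤) (const_coa s)) (fun ω => hM _ _ ω) ω
    linarith [(abs_le.mp hb).1]
  · exact ciSup_le fun σ'' => by
      have hb := abs_condexp_le hμ (𝓕.le s)
        (integrable_U_comp hUm hM (st_coa σ''.2.1) (const_coa s)) (fun ω => hM _ _ ω) ω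
      exact (abs_le.mp hb).2

theorem X1v_coa [Countable Ω] (s : ℝ≥0∞) {ω ω' : Ω} (h : ω' ∈ atom mΩ ω) :
    X1v μ 𝓕 U s ω' = X1v μ 𝓕 U s ω :=
  iInf_congr fun σ' => eq_on_atom stronglyMeasurable_condExp.measurable
    (atom_antitone (𝓕.le s) ω h)

theorem Y1v_coa [Countable Ω] (s : ℝ≥0∞) {ω ω' : Ω} (h : ω' ∈ atom mΩ ω) :
    Y1v μ 𝓕 U s ω' = Y1v μ 𝓕 U s ω :=
  iSup_congr fun σ' => eq_on_atom stronglyMeasurable_condExp.measurable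
    (atom_antitone (𝓕.le s) ω h)

theorem dynkin_coa [Countable Ω] (hUm : ∀ s t, Measurable[𝓕 (s ⊔ t)] (U s t))
    (ha : IsStoppingTime 𝓕 (fun ω₀ => (a ω₀ : WithTop ℝ≥0∞))) (hb : IsStoppingTime 𝓕 (fun ω₀ => (b ω₀ : WithTop ℝ≥0∞))) {ω ω' : Ω} (h : ω' ∈ atom mΩ ω) :
    dynkinKernel (X1v μ 𝓕 U) (Y1v μ 𝓕 U) (Zv U) a b ω'
      = dynkinKernel (X1v μ 𝓕 U) (Y1v μ 𝓕 U) (Zv U) a b ω := by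
  unfold dynkinKernel
  rw [st_eq_on_atom ha h, st_eq_on_atom hb h]
  split_ifs with h1 h2
  · exact X1v_coa _ h
  · exact Y1v_coa _ h
  · exact eq_on_atom (Measurable.le (𝓕.le _) (hUm (a ω) (a ω))) h

theorem abs_dynkin_le [Countable Ω] (hμ : ∀ ω : Ω, μ {ω} ≠ 0)
    (hUm : ∀ s t, Measurable[𝓕 (s ⊔ t)] (U s t)) (hM : ∀ s t ω, |U s t ω| ≤ M) (ω : Ω) :
    |dynkinKernel (X1v μ 𝓕 U) (Y1v μ 𝓕 U) (Zv U) a b ω| ≤ M := by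
  unfold dynkinKernel
  split_ifs
  · exact abs_X1v_le hμ hUm hM _ ω
  · exact abs_Y1v_le hμ hUm hM _ ω
  · exact hM _ _ ω

theorem dynkin_integrable [Countable Ω] (hμ : ∀ ω : Ω, μ {ω} ≠ 0)
    (hUm : ∀ s t, Measurable[𝓕 (s ⊔ t)] (U s t)) (hM : ∀ s t ω, |U s t ω| ≤ M)
    (ha : IsStoppingTime 𝓕 (fun ω₀ => (a ω₀ : WithTop ℝ≥0∞))) (hb : IsStoppingTime 𝓕 (fun ω₀ => (b ω₀ : WithTop ℝ≥0∞))) :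
    Integrable (fun ω => dynkinKernel (X1v μ 𝓕 U) (Y1v μ 𝓕 U) (Zv U) a b ω) μ :=
  integrable_of_bdd (measurable_of_atoms (m := mΩ) fun ω ω' h => dynkin_coa hUm ha hb h)
    (fun ω => abs_dynkin_le hμ hUm hM ω)

theorem lt_grid_gridIdx {h : ℝ} (hh : 0 < h) {t : ℝ≥0∞} (ht : t ≠ ∞) :
    t < grid h (gridIdx h t) := by
  have h1 : t.toReal / h < (⌊t.toReal / h⌋₊ : ℝ) + 1 := Nat.lt_floor_add_one _
  have h2 : t.toReal < ((⌊t.toReal / h⌋₊ : ℝ) + 1) * h := (div_lt_iff₀ hh).mp h1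
  have h3 : t = ENNReal.ofReal t.toReal := (ENNReal.ofReal_toReal ht).symm
  show t < ENNReal.ofReal ((⌊t.toReal / h⌋₊ + 1 : ℕ) * h)
  conv_lhs => rw [h3]
  rw [ENNReal.ofReal_lt_ofReal_iff (by positivity)]
  push_cast
  exact h2

theorem gridStrat_eq {h : ℝ} {bar : ℕ → Ω → ℝ≥0∞} {t : ℝ≥0∞} (ht : t ≠ ∞) :
    gridStrat h bar t = bar (gridIdx h t) := by
  funext ω
  simp [gridStrat, ht]

theorem gridStrat_mem_STgt {h : ℝ} (hh : 0 < h) {bar : ℕ → Ω → ℝ≥0∞}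
    (hbar : ∀ n, bar n ∈ STge 𝓕 (fun _ => grid h n)) {t : ℝ≥0∞} (ht : t ≠ ∞) :
    gridStrat h bar t ∈ STgt 𝓕 t := by
  rw [gridStrat_eq ht]
  exact ⟨(hbar _).1, fun ω => lt_of_lt_of_le (lt_grid_gridIdx hh ht) ((hbar _).2 ω)⟩

theorem gridStrat_mem_STge_const {h : ℝ} (hh : 0 < h) {bar : ℕ → Ω → ℝ≥0∞}
    (hbar : ∀ n, bar n ∈ STge 𝓕 (fun _ => grid h n)) (t : ℝ≥0∞) :
    gridStrat h bar t ∈ STge 𝓕 (fun _ => t) := by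
  by_cases ht : t = ∞
  · subst ht
    have he : gridStrat h bar ∞ = fun _ => (⊤ : ℝ≥0∞) := by funext ω; simp [gridStrat]
    rw [he]
    exact ⟨isStoppingTime_const 𝓕 ⊤, fun _ => le_top⟩
  · obtain ⟨hst, hgt⟩ := gridStrat_mem_STgt hh hbar ht
    exact ⟨hst, fun ω => (hgt ω).le⟩

theorem gridStrat_stopping {h : ℝ} {bar : ℕ → Ω → ℝ≥0∞}
    (hbar : ∀ n, IsStoppingTime 𝓕 (fun ω₀ => ((bar n) ω₀ : WithTop ℝ≥0∞))) (t : ℝ≥0∞) :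
    IsStoppingTime 𝓕 (fun ω₀ => ((gridStrat h bar t) ω₀ : WithTop ℝ≥0∞)) := by
  by_cases ht : t = ∞
  · subst ht
    have he : gridStrat h bar ∞ = fun _ => (⊤ : ℝ≥0∞) := by funext ω; simp [gridStrat]
    rw [he]
    exact isStoppingTime_const 𝓕 ⊤
  · rw [gridStrat_eq ht]
    exact hbar _

theorem measurable_uncurry_gridStrat [Countable Ω] {h : ℝ} {bar : ℕ → Ω → ℝ≥0∞}
    (hbar : ∀ n, IsStoppingTime 𝓕 (fun ω₀ => ((bar n) ω₀ : WithTop ℝ≥0∞))) :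
    Measurable (Function.uncurry (gridStrat h bar)) := by
  have hbm : ∀ n, Measurable (bar n) := fun n =>
    measurable_of_atoms (m := mΩ) (fun ω ω' hx => st_eq_on_atom (hbar n) hx)
  have h2 : Measurable fun q : Ω × ℕ => bar q.2 q.1 :=
    measurable_from_prod_countable_left fun n => hbm n
  have hgi : Measurable (gridIdx h) := by
    have hfl : Measurable fun t : ℝ≥0∞ => ⌊t.toReal / h⌋₊ :=
      Nat.measurable_floor.comp (ENNReal.measurable_toReal.div_const h)
    exact (measurable_from_top (f := fun k : ℕ => k + 1)).comp hfl
  have h3 : Measurable fun p : ℝ≥0∞ × Ω => bar (gridIdx h p.1) p.2 :=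
    h2.comp ((measurable_snd).prodMk (hgi.comp measurable_fst))
  have he : Function.uncurry (gridStrat h bar)
      = fun p : ℝ≥0∞ × Ω => if p.1 = ∞ then ∞ else bar (gridIdx h p.1) p.2 := rfl
  rw [he]
  exact Measurable.ite (measurable_fst (measurableSet_singleton ∞)) measurable_const h3

end Game


/-- Remark 3.4: in the zero-sum case, for a fixed stopping time `σ`, an
`ε`-saddle point `(ρ_σ^ε, τ_σ^ε)` of the conditional Dynkin game at `σ`, completed by the grid
strategies, yields a `5ε`-Nash equilibrium of the sub-game over `𝔗_σ`. -/
theorem zero_sum_subgame_nash [Countable Ω] (μ : Measure Ω) [IsProbabilityMeasure μ]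
    (𝓕 : Filtration ℝ≥0∞ mΩ) (hsetup : UsualSetup μ 𝓕)
    (U : ℝ≥0∞ → ℝ≥0∞ → Ω → ℝ) (r : ℝ≥0∞ → ℝ) (hU : PayoffAssumption 𝓕 U r)
    (ε h : ℝ) (hε : 0 < ε) (hh : 0 < h)
    (σ : Ω → ℝ≥0∞) (hσ : IsStoppingTime 𝓕 (fun ω => (σ ω : WithTop ℝ≥0∞)))
    (ρbar τbar : ℕ → Ω → ℝ≥0∞)
    (hρopt : IsOptRho1 μ 𝓕 U ε h ρbar) (hτopt : IsOptTau1 μ 𝓕 U ε h τbar)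
    (happrox : ∀ (ρ₀ τ₀ : Ω → ℝ≥0∞) (hρ₀ : IsStoppingTime 𝓕 (fun ω => (ρ₀ ω : WithTop ℝ≥0∞)))
        (hτ₀ : IsStoppingTime 𝓕 (fun ω => (τ₀ ω : WithTop ℝ≥0∞))),
      (∀ᵐ ω ∂μ,
        (μ[fun ω' => U (ρ₀ ω') (evalAt (gridStrat h τbar) ρ₀ ω') ω' |
          hρ₀.measurableSpace]) ω - 2*ε < X1v μ 𝓕 U (ρ₀ ω) ω) ∧
      (∀ᵐ ω ∂μ,
        Y1v μ 𝓕 U (τ₀ ω) ω <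
          (μ[fun ω' => U (evalAt (gridStrat h ρbar) τ₀ ω') (τ₀ ω') ω' |
            hτ₀.measurableSpace]) ω + 2*ε))
    (ρσε τσε : Ω → ℝ≥0∞) (hρσε : ρσε ∈ STge 𝓕 σ) (hτσε : τσε ∈ STge 𝓕 σ)
    (hsaddle : ∀ ρ₀ τ₀ : Ω → ℝ≥0∞, ρ₀ ∈ STge 𝓕 σ → τ₀ ∈ STge 𝓕 σ →
      ∀ᵐ ω ∂μ,
        condDynkin μ hσ.measurableSpace (X1v μ 𝓕 U) (Y1v μ 𝓕 U) (Zv U) ρ₀ τσε ω - ε ≤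
          condDynkin μ hσ.measurableSpace (X1v μ 𝓕 U) (Y1v μ 𝓕 U) (Zv U) ρσε τσε ω ∧
        condDynkin μ hσ.measurableSpace (X1v μ 𝓕 U) (Y1v μ 𝓕 U) (Zv U) ρσε τσε ω ≤
          condDynkin μ hσ.measurableSpace (X1v μ 𝓕 U) (Y1v μ 𝓕 U) (Zv U) ρσε τ₀ ω + ε) :
    IsStrategyGe 𝓕 σ (ρσε, gridStrat h ρbar) ∧
    IsStrategyGe 𝓕 σ (τσε, gridStrat h τbar) ∧
    ∀ ρ τ : (Ω → ℝ≥0∞) × (ℝ≥0∞ → Ω → ℝ≥0∞),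
      IsStrategyGe 𝓕 σ ρ → IsStrategyGe 𝓕 σ τ →
      (∀ᵐ ω ∂μ,
        condPayoff μ hσ.measurableSpace U ρ (τσε, gridStrat h τbar) ω ≤
          condPayoff μ hσ.measurableSpace U (ρσε, gridStrat h ρbar)
            (τσε, gridStrat h τbar) ω + 5*ε) ∧
      (∀ᵐ ω ∂μ,
        condPayoff μ hσ.measurableSpace (fun s t ω' => -U s t ω')
            (ρσε, gridStrat h ρbar) τ ω ≤
          condPayoff μ hσ.measurableSpace (fun s t ω' => -U s t ω')
            (ρσε, gridStrat h ρbar) (τσε, gridStrat h τbar) ω + 5*ε) := by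
  obtain ⟨hμpt, -, -, -⟩ := hsetup
  obtain ⟨⟨M, hM⟩, hUm, -, -, -, -, -, -⟩ := hU
  have hρbarm : ∀ n, ρbar n ∈ STge 𝓕 (fun _ => grid h n) := fun n => (hρopt n).1
  have hτbarm : ∀ n, τbar n ∈ STge 𝓕 (fun _ => grid h n) := fun n => (hτopt n).1
  have hρbarst : ∀ n, IsStoppingTime 𝓕 (fun ω₀ => ((ρbar n) ω₀ : WithTop ℝ≥0∞)) := fun n => (hρbarm n).1
  have hτbarst : ∀ n, IsStoppingTime 𝓕 (fun ω₀ => ((τbar n) ω₀ : WithTop ℝ≥0∞)) := fun n => (hτbarm n).1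
  have hTTρ : IsTT 𝓕 (gridStrat h ρbar) :=
    ⟨measurable_uncurry_gridStrat hρbarst, fun t ht => gridStrat_mem_STgt hh hρbarm ht⟩
  have hTTτ : IsTT 𝓕 (gridStrat h τbar) :=
    ⟨measurable_uncurry_gridStrat hτbarst, fun t ht => gridStrat_mem_STgt hh hτbarm ht⟩
  have hρσ : IsStoppingTime 𝓕 (fun ω₀ => (ρσε ω₀ : WithTop ℝ≥0∞)) := hρσε.1
  have hτσ : IsStoppingTime 𝓕 (fun ω₀ => (τσε ω₀ : WithTop ℝ≥0∞)) := hτσε.1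
  have hSGρ : IsStrategyGe 𝓕 σ (ρσε, gridStrat h ρbar) := ⟨⟨hρσ, hTTρ⟩, hρσε.2⟩
  have hSGτ : IsStrategyGe 𝓕 σ (τσε, gridStrat h τbar) := ⟨⟨hτσ, hTTτ⟩, hτσε.2⟩
  refine ⟨hSGρ, hSGτ, ?_⟩
  intro ρ τ hρS hτS
  have hρ1 : IsStoppingTime 𝓕 (fun ω₀ => (ρ.1 ω₀ : WithTop ℝ≥0∞)) := hρS.1.1
  have hτ1 : IsStoppingTime 𝓕 (fun ω₀ => (τ.1 ω₀ : WithTop ℝ≥0∞)) := hτS.1.1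
  have hmσΩ : hσ.measurableSpace ≤ mΩ := st_ms_le hσ
  -- Claim (upper) : playing any strategy `ρ'` against `τ* = (τσε, τ_h)`, the conditional
  -- payoff at the min σ-algebra is at most the Dynkin kernel plus `2ε`.
  have claimU : ∀ (ρ' : (Ω → ℝ≥0∞) × (ℝ≥0∞ → Ω → ℝ≥0∞)) (hρ'1 : IsStoppingTime 𝓕 (fun ω₀ => (ρ'.1 ω₀ : WithTop ℝ≥0∞)))
      (_ : IsStrategy 𝓕 ρ') (ω : Ω),
      (μ[(fun ω'' => U (play ρ' (τσε, gridStrat h τbar) ω'')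
          (play (τσε, gridStrat h τbar) ρ' ω'') ω'')|(st_min hρ'1 hτσ).measurableSpace]) ω
        ≤ dynkinKernel (X1v μ 𝓕 U) (Y1v μ 𝓕 U) (Zv U) ρ'.1 τσε ω + 2*ε := by
    intro ρ' hρ'1 hρ'S ω
    have hPi : Integrable (fun ω'' => U (play ρ' (τσε, gridStrat h τbar) ω'')
        (play (τσε, gridStrat h τbar) ρ' ω'') ω'') μ :=
      integrable_U_comp hUm hM (play_coa hρ'S hτσ) (play_coa ⟨hτσ, hTTτ⟩ hρ'1)
    rcases lt_trichotomy (ρ'.1 ω) (τσε ω) with hab | hab | hab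
    · -- case `ρ'.1 ω < τσε ω` : bounded via `happrox.1`
      have hQi : Integrable (fun ω' => U (ρ'.1 ω) (gridStrat h τbar (ρ'.1 ω) ω') ω') μ :=
        integrable_U_comp hUm hM (const_coa _) (st_coa (gridStrat_stopping hτbarst _))
      have hPQ : ∀ ω' ∈ atom (𝓕 (min (ρ'.1 ω) (τσε ω)) : MeasurableSpace Ω) ω,
          U (play ρ' (τσε, gridStrat h τbar) ω') (play (τσε, gridStrat h τbar) ρ' ω') ω'
            = U (ρ'.1 ω) (gridStrat h τbar (ρ'.1 ω) ω') ω' := by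
        intro ω' hω'
        obtain ⟨hlt, -, -⟩ := atom_min_spec hρ'1 hτσ hω'
        obtain ⟨he, hlt'⟩ := hlt hab
        have hp1 : play ρ' (τσε, gridStrat h τbar) ω' = ρ'.1 ω' := if_pos hlt'.le
        have hp2 : play (τσε, gridStrat h τbar) ρ' ω' = gridStrat h τbar (ρ'.1 ω') ω' :=
          if_neg (not_le.mpr hlt')
        rw [hp1, hp2, he]
      have hrepr := condexp_min_apply hμpt hρ'1 hτσ hPi hQi ω hPQ
      rw [hrepr, min_eq_left hab.le]
      have happ0 := ae_all' hμpt (happrox (fun _ => ρ'.1 ω) (fun _ => ρ'.1 ω)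
        (isStoppingTime_const 𝓕 (ρ'.1 ω)) (isStoppingTime_const 𝓕 (ρ'.1 ω))).1 ω
      rw [IsStoppingTime.measurableSpace_const] at happ0
      have happ : (μ[(fun ω' => U (ρ'.1 ω) (gridStrat h τbar (ρ'.1 ω) ω') ω')|𝓕 (ρ'.1 ω)]) ω
          - 2*ε < X1v μ 𝓕 U (ρ'.1 ω) ω := happ0
      have hker : dynkinKernel (X1v μ 𝓕 U) (Y1v μ 𝓕 U) (Zv U) ρ'.1 τσε ω
          = X1v μ 𝓕 U (ρ'.1 ω) ω := if_pos hab
      rw [hker]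
      linarith
    · -- case `ρ'.1 ω = τσε ω` : the payoff is `Z`
      have hQi : Integrable (fun ω' => U (ρ'.1 ω) (ρ'.1 ω) ω') μ :=
        integrable_U_comp hUm hM (const_coa _) (const_coa _)
      have hPQ : ∀ ω' ∈ atom (𝓕 (min (ρ'.1 ω) (τσε ω)) : MeasurableSpace Ω) ω,
          U (play ρ' (τσε, gridStrat h τbar) ω') (play (τσε, gridStrat h τbar) ρ' ω') ω'
            = U (ρ'.1 ω) (ρ'.1 ω) ω' := by
        intro ω' hω'
        obtain ⟨-, -, heq⟩ := atom_min_spec hρ'1 hτσ hω'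
        obtain ⟨he1, he2⟩ := heq hab
        have hp1 : play ρ' (τσε, gridStrat h τbar) ω' = ρ'.1 ω' :=
          if_pos (le_of_eq (he1.trans he2.symm))
        have hp2 : play (τσε, gridStrat h τbar) ρ' ω' = τσε ω' :=
          if_pos (le_of_eq (he2.trans he1.symm))
        rw [hp1, hp2, he1, he2]
      have hrepr := condexp_min_apply hμpt hρ'1 hτσ hPi hQi ω hPQ
      rw [hrepr]
      rw [← hab, min_self]
      have hsm : Measurable[𝓕 (ρ'.1 ω)] (U (ρ'.1 ω) (ρ'.1 ω)) := by
        have h0 := hUm (ρ'.1 ω) (ρ'.1 ω)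
        rwa [sup_idem] at h0
      have hcm := condExp_of_stronglyMeasurable (𝓕.le (ρ'.1 ω))
        hsm.stronglyMeasurable hQi
      rw [hcm]
      have hker : dynkinKernel (X1v μ 𝓕 U) (Y1v μ 𝓕 U) (Zv U) ρ'.1 τσε ω
          = Zv U (ρ'.1 ω) ω := by
        unfold dynkinKernel
        rw [← hab, if_neg (lt_irrefl _), if_neg (lt_irrefl _)]
      rw [hker]
      have : Zv U (ρ'.1 ω) ω = U (ρ'.1 ω) (ρ'.1 ω) ω := rfl
      rw [this]
      linarith
    · -- case `τσε ω < ρ'.1 ω` : bounded via `Y` being a supremum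
      have htne : τσε ω ≠ ∞ := hab.ne_top
      have hstgt := hρ'S.2.2 (τσε ω) htne
      have hQi : Integrable (fun ω' => U (ρ'.2 (τσε ω) ω') (τσε ω) ω') μ :=
        integrable_U_comp hUm hM (st_coa hstgt.1) (const_coa _)
      rw [ms_min_comm hρ'1 hτσ]
      have hPQ : ∀ ω' ∈ atom (𝓕 (min (τσε ω) (ρ'.1 ω)) : MeasurableSpace Ω) ω,
          U (play ρ' (τσε, gridStrat h τbar) ω') (play (τσε, gridStrat h τbar) ρ' ω') ω'
            = U (ρ'.2 (τσε ω) ω') (τσε ω) ω' := by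
        intro ω' hω'
        obtain ⟨hlt, -, -⟩ := atom_min_spec hτσ hρ'1 hω'
        obtain ⟨he, hlt'⟩ := hlt hab
        have hp1 : play ρ' (τσε, gridStrat h τbar) ω' = ρ'.2 (τσε ω') ω' :=
          if_neg (not_le.mpr hlt')
        have hp2 : play (τσε, gridStrat h τbar) ρ' ω' = τσε ω' := if_pos hlt'.le
        rw [hp1, hp2, he]
      have hrepr := condexp_min_apply hμpt hτσ hρ'1 hPi hQi ω hPQ
      rw [hrepr, min_eq_left hab.le]
      have hmem : ρ'.2 (τσε ω) ∈ STge 𝓕 (fun _ => τσε ω) :=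
        ⟨hstgt.1, fun ω'' => (hstgt.2 ω'').le⟩
      have hY := elem_le_Y1v hμpt hUm hM hmem ω
      have hker : dynkinKernel (X1v μ 𝓕 U) (Y1v μ 𝓕 U) (Zv U) ρ'.1 τσε ω
          = Y1v μ 𝓕 U (τσε ω) ω := by
        unfold dynkinKernel
        rw [if_neg (not_lt.mpr hab.le), if_pos hab]
      rw [hker]
      linarith
  -- Claim (lower) : playing `ρ* = (ρσε, ρ_h)` against any strategy `τ'`, the Dynkin kernel
  -- is at most the conditional payoff at the min σ-algebra plus `2ε`.
  have claimL : ∀ (τ' : (Ω → ℝ≥0∞) × (ℝ≥0∞ → Ω → ℝ≥0∞)) (hτ'1 : IsStoppingTime 𝓕 (fun ω₀ => (τ'.1 ω₀ : WithTop ℝ≥0∞)))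
      (_ : IsStrategy 𝓕 τ') (ω : Ω),
      dynkinKernel (X1v μ 𝓕 U) (Y1v μ 𝓕 U) (Zv U) ρσε τ'.1 ω
        ≤ (μ[(fun ω'' => U (play (ρσε, gridStrat h ρbar) τ' ω'')
          (play τ' (ρσε, gridStrat h ρbar) ω'') ω'')|(st_min hρσ hτ'1).measurableSpace]) ω + 2*ε := by
    intro τ' hτ'1 hτ'S ω
    have hPi : Integrable (fun ω'' => U (play (ρσε, gridStrat h ρbar) τ' ω'')
        (play τ' (ρσε, gridStrat h ρbar) ω'') ω'') μ :=
      integrable_U_comp hUm hM (play_coa ⟨hρσ, hTTρ⟩ hτ'1) (play_coa hτ'S hρσ)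
    rcases lt_trichotomy (ρσε ω) (τ'.1 ω) with hab | hab | hab
    · -- case `ρσε ω < τ'.1 ω` : bounded via `X` being an infimum
      have hsne : ρσε ω ≠ ∞ := hab.ne_top
      have hstgt := hτ'S.2.2 (ρσε ω) hsne
      have hQi : Integrable (fun ω' => U (ρσε ω) (τ'.2 (ρσε ω) ω') ω') μ :=
        integrable_U_comp hUm hM (const_coa _) (st_coa hstgt.1)
      have hPQ : ∀ ω' ∈ atom (𝓕 (min (ρσε ω) (τ'.1 ω)) : MeasurableSpace Ω) ω,
          U (play (ρσε, gridStrat h ρbar) τ' ω') (play τ' (ρσε, gridStrat h ρbar) ω') ω'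
            = U (ρσε ω) (τ'.2 (ρσε ω) ω') ω' := by
        intro ω' hω'
        obtain ⟨hlt, -, -⟩ := atom_min_spec hρσ hτ'1 hω'
        obtain ⟨he, hlt'⟩ := hlt hab
        have hp1 : play (ρσε, gridStrat h ρbar) τ' ω' = ρσε ω' := if_pos hlt'.le
        have hp2 : play τ' (ρσε, gridStrat h ρbar) ω' = τ'.2 (ρσε ω') ω' :=
          if_neg (not_le.mpr hlt')
        rw [hp1, hp2, he]
      have hrepr := condexp_min_apply hμpt hρσ hτ'1 hPi hQi ω hPQ
      rw [hrepr, min_eq_left hab.le]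
      have hmem : τ'.2 (ρσε ω) ∈ STge 𝓕 (fun _ => ρσε ω) :=
        ⟨hstgt.1, fun ω'' => (hstgt.2 ω'').le⟩
      have hX := X1v_le_elem hμpt hUm hM hmem ω
      have hker : dynkinKernel (X1v μ 𝓕 U) (Y1v μ 𝓕 U) (Zv U) ρσε τ'.1 ω
          = X1v μ 𝓕 U (ρσε ω) ω := if_pos hab
      rw [hker]
      linarith
    · -- case `ρσε ω = τ'.1 ω`
      have hQi : Integrable (fun ω' => U (ρσε ω) (ρσε ω) ω') μ :=
        integrable_U_comp hUm hM (const_coa _) (const_coa _)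
      have hPQ : ∀ ω' ∈ atom (𝓕 (min (ρσε ω) (τ'.1 ω)) : MeasurableSpace Ω) ω,
          U (play (ρσε, gridStrat h ρbar) τ' ω') (play τ' (ρσε, gridStrat h ρbar) ω') ω'
            = U (ρσε ω) (ρσε ω) ω' := by
        intro ω' hω'
        obtain ⟨-, -, heq⟩ := atom_min_spec hρσ hτ'1 hω'
        obtain ⟨he1, he2⟩ := heq hab
        have hp1 : play (ρσε, gridStrat h ρbar) τ' ω' = ρσε ω' :=
          if_pos (le_of_eq (he1.trans he2.symm))
        have hp2 : play τ' (ρσε, gridStrat h ρbar) ω' = τ'.1 ω' :=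
          if_pos (le_of_eq (he2.trans he1.symm))
        rw [hp1, hp2, he1, he2]
      have hrepr := condexp_min_apply hμpt hρσ hτ'1 hPi hQi ω hPQ
      rw [hrepr]
      rw [← hab, min_self]
      have hsm : Measurable[𝓕 (ρσε ω)] (U (ρσε ω) (ρσε ω)) := by
        have h0 := hUm (ρσε ω) (ρσε ω)
        rwa [sup_idem] at h0
      have hcm := condExp_of_stronglyMeasurable (𝓕.le (ρσε ω)) hsm.stronglyMeasurable hQi
      rw [hcm]
      have hker : dynkinKernel (X1v μ 𝓕 U) (Y1v μ 𝓕 U) (Zv U) ρσε τ'.1 ω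
          = Zv U (ρσε ω) ω := by
        unfold dynkinKernel
        rw [← hab, if_neg (lt_irrefl _), if_neg (lt_irrefl _)]
      rw [hker]
      have hz : Zv U (ρσε ω) ω = U (ρσε ω) (ρσε ω) ω := rfl
      rw [hz]
      linarith
    · -- case `τ'.1 ω < ρσε ω` : bounded via `happrox.2`
      have hQi : Integrable (fun ω' => U (gridStrat h ρbar (τ'.1 ω) ω') (τ'.1 ω) ω') μ :=
        integrable_U_comp hUm hM (st_coa (gridStrat_stopping hρbarst _)) (const_coa _)
      rw [ms_min_comm hρσ hτ'1]
      have hPQ : ∀ ω' ∈ atom (𝓕 (min (τ'.1 ω) (ρσε ω)) : MeasurableSpace Ω) ω,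
          U (play (ρσε, gridStrat h ρbar) τ' ω') (play τ' (ρσε, gridStrat h ρbar) ω') ω'
            = U (gridStrat h ρbar (τ'.1 ω) ω') (τ'.1 ω) ω' := by
        intro ω' hω'
        obtain ⟨hlt, -, -⟩ := atom_min_spec hτ'1 hρσ hω'
        obtain ⟨he, hlt'⟩ := hlt hab
        have hp1 : play (ρσε, gridStrat h ρbar) τ' ω' = gridStrat h ρbar (τ'.1 ω') ω' :=
          if_neg (not_le.mpr hlt')
        have hp2 : play τ' (ρσε, gridStrat h ρbar) ω' = τ'.1 ω' := if_pos hlt'.le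
        rw [hp1, hp2, he]
      have hrepr := condexp_min_apply hμpt hτ'1 hρσ hPi hQi ω hPQ
      rw [hrepr, min_eq_left hab.le]
      have happ0 := ae_all' hμpt (happrox (fun _ => τ'.1 ω) (fun _ => τ'.1 ω)
        (isStoppingTime_const 𝓕 (τ'.1 ω)) (isStoppingTime_const 𝓕 (τ'.1 ω))).2 ω
      rw [IsStoppingTime.measurableSpace_const] at happ0
      have happ : Y1v μ 𝓕 U (τ'.1 ω) ω
          < (μ[(fun ω' => U (gridStrat h ρbar (τ'.1 ω) ω') (τ'.1 ω) ω')|𝓕 (τ'.1 ω)]) ω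
            + 2*ε := happ0
      have hker : dynkinKernel (X1v μ 𝓕 U) (Y1v μ 𝓕 U) (Zv U) ρσε τ'.1 ω
          = Y1v μ 𝓕 U (τ'.1 ω) ω := by
        unfold dynkinKernel
        rw [if_neg (not_lt.mpr hab.le), if_pos hab]
      rw [hker]
      linarith
  -- Kernel integrability
  have hK1i : Integrable (fun ω => dynkinKernel (X1v μ 𝓕 U) (Y1v μ 𝓕 U) (Zv U) ρ.1 τσε ω) μ :=
    dynkin_integrable hμpt hUm hM hρ1 hτσ
  have hK2i : Integrable (fun ω => dynkinKernel (X1v μ 𝓕 U) (Y1v μ 𝓕 U) (Zv U) ρσε τσε ω) μ :=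
    dynkin_integrable hμpt hUm hM hρσ hτσ
  have hK3i : Integrable (fun ω => dynkinKernel (X1v μ 𝓕 U) (Y1v μ 𝓕 U) (Zv U) ρσε τ.1 ω) μ :=
    dynkin_integrable hμpt hUm hM hρσ hτ1
  -- saddle point inequalities, pointwise
  have hsad1 := ae_all' hμpt (hsaddle ρ.1 τσε ⟨hρ1, hρS.2⟩ hτσε)
  have hsad2 := ae_all' hμpt (hsaddle ρσε τ.1 hρσε ⟨hτ1, hτS.2⟩)
  constructor
  · refine ae_of_all μ fun ω => ?_
    show (μ[(fun ω'' => U (play ρ (τσε, gridStrat h τbar) ω'')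
        (play (τσε, gridStrat h τbar) ρ ω'') ω'')|hσ.measurableSpace]) ω
      ≤ (μ[(fun ω'' => U (play (ρσε, gridStrat h ρbar) (τσε, gridStrat h τbar) ω'')
        (play (τσε, gridStrat h τbar) (ρσε, gridStrat h ρbar) ω'') ω'')|hσ.measurableSpace]) ω
        + 5*ε
    have hmle1 : hσ.measurableSpace ≤ (st_min hρ1 hτσ).measurableSpace :=
      hσ.measurableSpace_mono (st_min hρ1 hτσ) (fun ω => WithTop.coe_le_coe.mpr (le_min (hρS.2 ω) (hτσε.2 ω)))
    have hmle2 : hσ.measurableSpace ≤ (st_min hρσ hτσ).measurableSpace :=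
      hσ.measurableSpace_mono (st_min hρσ hτσ) (fun ω => WithTop.coe_le_coe.mpr (le_min (hρσε.2 ω) (hτσε.2 ω)))
    have e1 := condexp_tower_apply hμpt hmle1 (st_ms_le (st_min hρ1 hτσ))
      (fun ω'' => U (play ρ (τσε, gridStrat h τbar) ω'')
        (play (τσε, gridStrat h τbar) ρ ω'') ω'') ω
    have e2 : (μ[(μ[(fun ω'' => U (play ρ (τσε, gridStrat h τbar) ω'')
        (play (τσε, gridStrat h τbar) ρ ω'') ω'')|(st_min hρ1 hτσ).measurableSpace])|
          hσ.measurableSpace]) ω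
        ≤ (μ[(fun ω'' => dynkinKernel (X1v μ 𝓕 U) (Y1v μ 𝓕 U) (Zv U) ρ.1 τσε ω'')|
          hσ.measurableSpace]) ω + 2*ε :=
      condexp_le_condexp_add_const hμpt hmσΩ integrable_condExp hK1i
        (claimU ρ hρ1 hρS.1) ω
    have e3 : (μ[(fun ω'' => dynkinKernel (X1v μ 𝓕 U) (Y1v μ 𝓕 U) (Zv U) ρ.1 τσε ω'')|
        hσ.measurableSpace]) ω
        ≤ (μ[(fun ω'' => dynkinKernel (X1v μ 𝓕 U) (Y1v μ 𝓕 U) (Zv U) ρσε τσε ω'')|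
          hσ.measurableSpace]) ω + ε := by
      have := (hsad1 ω).1
      have h1 : condDynkin μ hσ.measurableSpace (X1v μ 𝓕 U) (Y1v μ 𝓕 U) (Zv U) ρ.1 τσε ω
          = (μ[(fun ω'' => dynkinKernel (X1v μ 𝓕 U) (Y1v μ 𝓕 U) (Zv U) ρ.1 τσε ω'')|
            hσ.measurableSpace]) ω := rfl
      have h2 : condDynkin μ hσ.measurableSpace (X1v μ 𝓕 U) (Y1v μ 𝓕 U) (Zv U) ρσε τσε ω
          = (μ[(fun ω'' => dynkinKernel (X1v μ 𝓕 U) (Y1v μ 𝓕 U) (Zv U) ρσε τσε ω'')|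
            hσ.measurableSpace]) ω := rfl
      rw [h1, h2] at this
      linarith
    have e4 : (μ[(fun ω'' => dynkinKernel (X1v μ 𝓕 U) (Y1v μ 𝓕 U) (Zv U) ρσε τσε ω'')|
        hσ.measurableSpace]) ω
        ≤ (μ[(fun ω'' => U (play (ρσε, gridStrat h ρbar) (τσε, gridStrat h τbar) ω'')
          (play (τσε, gridStrat h τbar) (ρσε, gridStrat h ρbar) ω'') ω'')|
            hσ.measurableSpace]) ω + 2*ε := by
      have e4' := condexp_le_condexp_add_const hμpt hmσΩ hK2i integrable_condExp
        (claimL (τσε, gridStrat h τbar) hτσ hSGτ.1) ω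
      rwa [condexp_tower_apply hμpt hmle2 (st_ms_le (st_min hρσ hτσ))] at e4'
    linarith [e1, e2, e3, e4, e1 ▸ e2]
  · refine ae_of_all μ fun ω => ?_
    have hn1 : condPayoff μ hσ.measurableSpace (fun s t ω' => -U s t ω')
        (ρσε, gridStrat h ρbar) τ ω
        = -(μ[(fun ω'' => U (play (ρσε, gridStrat h ρbar) τ ω'')
          (play τ (ρσε, gridStrat h ρbar) ω'') ω'')|hσ.measurableSpace]) ω :=
      condexp_neg_apply hμpt _ ω
    have hn2 : condPayoff μ hσ.measurableSpace (fun s t ω' => -U s t ω')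
        (ρσε, gridStrat h ρbar) (τσε, gridStrat h τbar) ω
        = -(μ[(fun ω'' => U (play (ρσε, gridStrat h ρbar) (τσε, gridStrat h τbar) ω'')
          (play (τσε, gridStrat h τbar) (ρσε, gridStrat h ρbar) ω'') ω'')|
            hσ.measurableSpace]) ω :=
      condexp_neg_apply hμpt _ ω
    rw [hn1, hn2]
    have hmle2 : hσ.measurableSpace ≤ (st_min hρσ hτσ).measurableSpace :=
      hσ.measurableSpace_mono (st_min hρσ hτσ) (fun ω => WithTop.coe_le_coe.mpr (le_min (hρσε.2 ω) (hτσε.2 ω)))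
    have hmle3 : hσ.measurableSpace ≤ (st_min hρσ hτ1).measurableSpace :=
      hσ.measurableSpace_mono (st_min hρσ hτ1) (fun ω => WithTop.coe_le_coe.mpr (le_min (hρσε.2 ω) (hτS.2 ω)))
    have e1 : (μ[(fun ω'' => U (play (ρσε, gridStrat h ρbar) (τσε, gridStrat h τbar) ω'')
        (play (τσε, gridStrat h τbar) (ρσε, gridStrat h ρbar) ω'') ω'')|
          hσ.measurableSpace]) ω
        ≤ (μ[(fun ω'' => dynkinKernel (X1v μ 𝓕 U) (Y1v μ 𝓕 U) (Zv U) ρσε τσε ω'')|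
          hσ.measurableSpace]) ω + 2*ε := by
      have e1' := condexp_le_condexp_add_const hμpt hmσΩ integrable_condExp hK2i
        (claimU (ρσε, gridStrat h ρbar) hρσ hSGρ.1) ω
      rwa [condexp_tower_apply hμpt hmle2 (st_ms_le (st_min hρσ hτσ))] at e1'
    have e2 : (μ[(fun ω'' => dynkinKernel (X1v μ 𝓕 U) (Y1v μ 𝓕 U) (Zv U) ρσε τσε ω'')|
        hσ.measurableSpace]) ω
        ≤ (μ[(fun ω'' => dynkinKernel (X1v μ 𝓕 U) (Y1v μ 𝓕 U) (Zv U) ρσε τ.1 ω'')|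
          hσ.measurableSpace]) ω + ε := by
      have := (hsad2 ω).2
      have h1 : condDynkin μ hσ.measurableSpace (X1v μ 𝓕 U) (Y1v μ 𝓕 U) (Zv U) ρσε τσε ω
          = (μ[(fun ω'' => dynkinKernel (X1v μ 𝓕 U) (Y1v μ 𝓕 U) (Zv U) ρσε τσε ω'')|
            hσ.measurableSpace]) ω := rfl
      have h2 : condDynkin μ hσ.measurableSpace (X1v μ 𝓕 U) (Y1v μ 𝓕 U) (Zv U) ρσε τ.1 ω
          = (μ[(fun ω'' => dynkinKernel (X1v μ 𝓕 U) (Y1v μ 𝓕 U) (Zv U) ρσε τ.1 ω'')|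
            hσ.measurableSpace]) ω := rfl
      rw [h1, h2] at this
      linarith
    have e3 : (μ[(fun ω'' => dynkinKernel (X1v μ 𝓕 U) (Y1v μ 𝓕 U) (Zv U) ρσε τ.1 ω'')|
        hσ.measurableSpace]) ω
        ≤ (μ[(fun ω'' => U (play (ρσε, gridStrat h ρbar) τ ω'')
          (play τ (ρσε, gridStrat h ρbar) ω'') ω'')|hσ.measurableSpace]) ω + 2*ε := by
      have e3' := condexp_le_condexp_add_const hμpt hmσΩ hK3i integrable_condExp
        (claimL τ hτ1 hτS.1) ω
      rwa [condexp_tower_apply hμpt hmle3 (st_ms_le (st_min hρσ hτ1))] at e3'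
    linarith


end StoppingGames
end
end

section
/- For i = 1,2, the process W^i = (W_t^i)_{t∈[0,∞]} defined by W_t^1 := E[U¹(t, τ_h²(t)) | 𝓕_t] and W_t^2 := E[U²(ρ_h¹(t), t) | 𝓕_t] is right continuous (pathwise, at every t ∈ [0,∞)). -/
/-!
Common setup for "On the non-zero-sum stopping game ending at the maximum of the stopping
strategies".  Time is indexed by `[0,∞] = ℝ≥0∞`.  Since `Ω` is at most countable and `ℙ`
charges every point, essential suprema/infima over families of stopping times coincide with
the pointwise ones, which is how they are formalized below.
-/

open MeasureTheory Filter Set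
open scoped ENNReal Topology

noncomputable section

namespace StoppingGames

variable {Ω : Type*} [mΩ : MeasurableSpace Ω]

lemma forall_of_ae {μ : Measure Ω} (hch : ∀ ω : Ω, μ {ω} ≠ 0) {p : Ω → Prop}
    (h : ∀ᵐ ω ∂μ, p ω) : ∀ ω, p ω := by
  intro ω
  by_contra hω
  have h1 : μ {ω} ≤ μ {a | ¬ p a} := measure_mono (by simpa using hω)
  rw [ae_iff] at h
  exact hch ω (le_antisymm (h ▸ h1) (zero_le))

/-- The atom of `ω` in the σ-algebra `m`. -/
def atomOf (m : MeasurableSpace Ω) (ω : Ω) : Set Ω := ⋂₀ {A | MeasurableSet[m] A ∧ ω ∈ A}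

omit mΩ in
lemma mem_atomOf_self (m : MeasurableSpace Ω) (ω : Ω) : ω ∈ atomOf m ω :=
  fun _ hA => hA.2

omit mΩ in
lemma atomOf_subset {m : MeasurableSpace Ω} {A : Set Ω} (hA : MeasurableSet[m] A) {ω : Ω}
    (hω : ω ∈ A) : atomOf m ω ⊆ A :=
  sInter_subset_of_mem ⟨hA, hω⟩

omit mΩ in
lemma atomOf_mono {m m' : MeasurableSpace Ω} (h : m ≤ m') (ω : Ω) :
    atomOf m' ω ⊆ atomOf m ω :=
  sInter_subset_sInter (fun _ hA => ⟨h _ hA.1, hA.2⟩)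

omit mΩ in
lemma measurableSet_atomOf [Countable Ω] (m : MeasurableSpace Ω) (ω : Ω) :
    MeasurableSet[m] (atomOf m ω) := by
  classical
  have key : ∀ ω' : Ω, ω' ∉ atomOf m ω → ∃ A : Set Ω, (MeasurableSet[m] A ∧ ω ∈ A) ∧ ω' ∉ A := by
    intro ω' h
    by_contra hc
    push_neg at hc
    exact h (fun A hA => hc A hA)
  choose! B hB1 hB2 using key
  have hrw : atomOf m ω = ⋂ ω' : Ω, (if ω' ∈ atomOf m ω then Set.univ else B ω') := by
    apply Set.Subset.antisymm
    · intro x hx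
      apply Set.mem_iInter.2
      intro ω'
      by_cases hc : ω' ∈ atomOf m ω
      · simp [hc]
      · rw [if_neg hc]
        exact hx _ (hB1 ω' hc)
    · intro x hx
      by_contra hxa
      have := Set.mem_iInter.1 hx x
      rw [if_neg hxa] at this
      exact hB2 x hxa this
  rw [hrw]
  refine MeasurableSet.iInter fun ω' => ?_
  by_cases hc : ω' ∈ atomOf m ω
  · rw [if_pos hc]; exact MeasurableSet.univ
  · rw [if_neg hc]; exact (hB1 ω' hc).1

omit mΩ in
lemma const_on_atom {m : MeasurableSpace Ω} {f : Ω → ℝ} (hf : StronglyMeasurable[m] f)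
    {ω ω' : Ω} (h : ω' ∈ atomOf m ω) : f ω' = f ω :=
  atomOf_subset (hf.measurable (measurableSet_singleton (f ω)))
    (by simp : ω ∈ f ⁻¹' {f ω}) h

omit mΩ in
lemma condexp_apply_eq {m mΩ : MeasurableSpace Ω} {μ : Measure Ω} [IsProbabilityMeasure μ]
    [Countable Ω] (hch : ∀ ω : Ω, μ {ω} ≠ 0) (hm : m ≤ mΩ)
    {g : Ω → ℝ} (hg : Integrable g μ) (ω : Ω) :
    (μ[g|m]) ω = (∫ x in atomOf m ω, g x ∂μ) / (μ (atomOf m ω)).toReal := by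
  haveI : IsFiniteMeasure (μ.trim hm) := isFiniteMeasure_trim hm
  set A := atomOf m ω with hA
  have hAm : MeasurableSet[m] A := measurableSet_atomOf m ω
  have hA0 : μ A ≠ 0 := fun h0 => hch ω (le_antisymm
    (h0 ▸ measure_mono (singleton_subset_iff.2 (mem_atomOf_self m ω))) (zero_le))
  have hAtop : μ A ≠ ∞ := measure_ne_top μ A
  have h1 : ∫ x in A, (μ[g|m]) x ∂μ = ∫ x in A, g x ∂μ := setIntegral_condExp hm hg hAm
  have hAm0 := hm _ hAm
  have h2 : ∫ x in A, (μ[g|m]) x ∂μ = (μ A).toReal * (μ[g|m]) ω := by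
    have hEq : Set.EqOn (μ[g|m]) (fun _ => (μ[g|m]) ω) A := fun x hx =>
      const_on_atom stronglyMeasurable_condExp hx
    rw [setIntegral_congr_fun hAm0 hEq, setIntegral_const (μ := μ), smul_eq_mul, measureReal_def]
  have hpos : (μ A).toReal ≠ 0 := ENNReal.toReal_ne_zero.2 ⟨hA0, hAtop⟩
  rw [h2] at h1
  rw [eq_div_iff hpos]
  linarith [h1]

omit mΩ in
lemma abs_condexp_le_s11 {m mΩ : MeasurableSpace Ω} {μ : Measure Ω} [IsProbabilityMeasure μ]
    [Countable Ω] (hch : ∀ ω : Ω, μ {ω} ≠ 0) (hm : m ≤ mΩ)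
    {g : Ω → ℝ} (hg : Integrable g μ) {C : ℝ} (hC : ∀ x, |g x| ≤ C) (ω : Ω) :
    |(μ[g|m]) ω| ≤ C := by
  rw [condexp_apply_eq hch hm hg ω]
  set A := atomOf m ω with hA
  have hA0 : μ A ≠ 0 := fun h0 => hch ω (le_antisymm
    (h0 ▸ measure_mono (singleton_subset_iff.2 (mem_atomOf_self m ω))) (zero_le))
  have hpos : 0 < (μ A).toReal := ENNReal.toReal_pos hA0 (measure_ne_top μ A)
  have hnum : |∫ x in A, g x ∂μ| ≤ C * (μ A).toReal := by
    rw [← Real.norm_eq_abs]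
    exact norm_setIntegral_le_of_norm_le_const (measure_lt_top μ A)
      (C := C) (fun x _ => by rw [Real.norm_eq_abs]; exact hC x)
  rw [abs_div, abs_of_pos hpos, div_le_iff₀ hpos]
  exact hnum

lemma measurable_comp_countable [Countable Ω] {τ : Ω → ℝ≥0∞} (hτ : Measurable τ)
    {F : ℝ≥0∞ → Ω → ℝ} (hF : ∀ a, Measurable (F a)) : Measurable fun ω => F (τ ω) ω := by
  intro s hs
  have hrw : (fun ω => F (τ ω) ω) ⁻¹' s = ⋃ ω' : Ω, (τ ⁻¹' {τ ω'} ∩ (F (τ ω')) ⁻¹' s) := by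
    ext x
    constructor
    · intro hx
      exact Set.mem_iUnion.2 ⟨x, rfl, hx⟩
    · intro hx
      obtain ⟨ω', hx1, hx2⟩ := Set.mem_iUnion.1 hx
      have hτx : τ x = τ ω' := hx1
      simpa [Set.mem_preimage, hτx] using hx2
  rw [hrw]
  exact MeasurableSet.iUnion fun ω' => (hτ (measurableSet_singleton _)).inter (hF _ hs)

lemma integrable_of_bound {μ : Measure Ω} [IsFiniteMeasure μ] {f : Ω → ℝ} (hf : Measurable f)
    {M : ℝ} (hM : ∀ x, |f x| ≤ M) : Integrable f μ :=
  Integrable.mono' (integrable_const M) hf.aestronglyMeasurable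
    (ae_of_all _ fun x => by rw [Real.norm_eq_abs]; exact hM x)

lemma cwa_of {F : ℝ≥0∞ → ℝ} {t : ℝ≥0∞}
    (H : ∀ ε : ℝ, 0 < ε → ∃ b, t < b ∧ ∀ s, t ≤ s → s < b → |F s - F t| < ε) :
    ContinuousWithinAt F (Ici t) t := by
  rw [ContinuousWithinAt, Metric.tendsto_nhds]
  intro ε hε
  obtain ⟨b, hb, hball⟩ := H ε hε
  have h1 : Iio b ∈ 𝓝[Ici t] t := nhdsWithin_le_nhds (Iio_mem_nhds hb)
  filter_upwards [h1, self_mem_nhdsWithin] with s hs1 hs2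
  rw [Real.dist_eq]
  exact hball s hs2 hs1

lemma gridIdx_eventually_const {h : ℝ} (hh : 0 < h) {t : ℝ≥0∞} (ht : t ≠ ∞) :
    ∃ b, t < b ∧ ∀ s, t ≤ s → s < b → s ≠ ∞ ∧ gridIdx h s = gridIdx h t := by
  set k := ⌊t.toReal / h⌋₊ with hk
  refine ⟨ENNReal.ofReal ((k + 1) * h), ?_, ?_⟩
  · have h1 : t.toReal / h < k + 1 := Nat.lt_floor_add_one _
    have h2 : t.toReal < (k + 1) * h := by
      rw [div_lt_iff₀ hh] at h1
      linarith
    calc t = ENNReal.ofReal t.toReal := (ENNReal.ofReal_toReal ht).symm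
      _ < ENNReal.ofReal ((k + 1) * h) := (ENNReal.ofReal_lt_ofReal_iff (by positivity)).2 h2
  · intro s hts hsb
    have hs : s ≠ ∞ := (hsb.trans_le le_top).ne
    refine ⟨hs, ?_⟩
    have hsr : s.toReal < (k + 1) * h := by
      rw [← ENNReal.ofReal_lt_ofReal_iff (by positivity), ENNReal.ofReal_toReal hs]
      exact hsb
    have hsr2 : (k : ℝ) ≤ s.toReal / h := by
      have h3 : (k : ℝ) ≤ t.toReal / h := Nat.floor_le (by positivity)
      have h4 : t.toReal ≤ s.toReal := ENNReal.toReal_mono hs hts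
      calc (k : ℝ) ≤ t.toReal / h := h3
        _ ≤ s.toReal / h := by gcongr
    have hfl : ⌊s.toReal / h⌋₊ = k := by
      rw [Nat.floor_eq_iff (by positivity)]
      refine ⟨hsr2, ?_⟩
      rw [div_lt_iff₀ hh]
      push_cast
      linarith
    simp [gridIdx, hfl, hk]

lemma condexp_atom_approx [Countable Ω] {μ : Measure Ω} [IsProbabilityMeasure μ]
    (𝓕 : Filtration ℝ≥0∞ mΩ) (hch : ∀ ω : Ω, μ {ω} ≠ 0)
    (hrc : ∀ t : ℝ≥0∞, (𝓕 t : MeasurableSpace Ω) = ⨅ s ∈ Ioi t, (𝓕 s : MeasurableSpace Ω))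
    {g : Ω → ℝ} (hg : Integrable g μ) {M : ℝ} (hM : ∀ x, |g x| ≤ M)
    (ω : Ω) {t : ℝ≥0∞} (ht : t ≠ ∞) {ε : ℝ} (hε : 0 < ε) :
    ∃ b, t < b ∧ ∀ s, t ≤ s → s < b → |(μ[g|𝓕 s]) ω - (μ[g|𝓕 t]) ω| < ε := by
  classical
  set A : ℝ≥0∞ → Set Ω := fun s => atomOf (𝓕 s) ω with hAdef
  have hAmem : ∀ s, ω ∈ A s := fun s => mem_atomOf_self _ ω
  have hAm : ∀ s, MeasurableSet (A s) := fun s => (𝓕.le s) _ (measurableSet_atomOf _ ω)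
  have hAmono : ∀ {s s' : ℝ≥0∞}, s ≤ s' → A s' ⊆ A s := fun hss' => atomOf_mono (𝓕.mono hss') ω
  set u : ℕ → ℝ≥0∞ := fun n => t + ((n : ℝ≥0∞) + 1)⁻¹ with hudef
  have hinvne : ∀ n : ℕ, ((n : ℝ≥0∞) + 1)⁻¹ ≠ 0 := fun n =>
    ENNReal.inv_ne_zero.2 (by simp)
  have hupos : ∀ n, t < u n := fun n => ENNReal.lt_add_right ht (hinvne n)
  have huanti : Antitone u := by
    intro n m hnm
    have : ((m : ℝ≥0∞) + 1)⁻¹ ≤ ((n : ℝ≥0∞) + 1)⁻¹ := by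
      have h' : ((n : ℝ≥0∞)) ≤ (m : ℝ≥0∞) := by exact_mod_cast hnm
      gcongr
    exact add_le_add_right this t
  have hUexists : ∀ s', t < s' → ∃ n, u n ≤ s' := by
    intro s' hs'
    obtain ⟨n, hn⟩ := ENNReal.exists_inv_nat_lt (a := s' - t) (tsub_pos_of_lt hs').ne'
    refine ⟨n, ?_⟩
    have h1 : ((n : ℝ≥0∞) + 1)⁻¹ ≤ ((n : ℝ≥0∞))⁻¹ := by gcongr; exact le_self_add
    calc u n = t + ((n : ℝ≥0∞) + 1)⁻¹ := rfl
      _ ≤ t + (s' - t) := add_le_add_right (h1.trans hn.le) t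
      _ = s' := add_tsub_cancel_of_le hs'.le
  have hkey : A t = ⋃ n, A (u n) := by
    apply Set.Subset.antisymm
    · have hmeasT : MeasurableSet[(𝓕 t : MeasurableSpace Ω)] (⋃ n, A (u n)) := by
        rw [hrc t]
        rw [MeasurableSpace.measurableSet_iInf]
        intro s'
        rw [MeasurableSpace.measurableSet_iInf]
        intro hs'
        have hEq : (⋃ n, A (u n)) = ⋃ n, A (u n ⊓ s') := by
          apply Set.Subset.antisymm
          · exact Set.iUnion_mono fun n => hAmono inf_le_left
          · intro x hx
            obtain ⟨n, hn⟩ := Set.mem_iUnion.1 hx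
            obtain ⟨m0, hm0⟩ := hUexists s' hs'
            refine Set.mem_iUnion.2 ⟨max m0 n, ?_⟩
            have h1 : u (max m0 n) ≤ u n ⊓ s' :=
              le_inf (huanti (le_max_right _ _)) ((huanti (le_max_left _ _)).trans hm0)
            exact hAmono h1 hn
        rw [hEq]
        exact MeasurableSet.iUnion fun n =>
          (𝓕.mono inf_le_right) _ (measurableSet_atomOf _ ω)
      exact atomOf_subset hmeasT (Set.mem_iUnion.2 ⟨0, hAmem _⟩)
    · exact Set.iUnion_subset fun n => hAmono (hupos n).le
  have htend : Tendsto (fun n => μ (A t \ A (u n))) atTop (𝓝 0) := by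
    have h1 : Tendsto (fun n => μ (A t \ A (u n))) atTop
        (𝓝 (μ (⋂ n, (A t \ A (u n))))) :=
      tendsto_measure_iInter_atTop
        (fun n => ((hAm t).diff (hAm (u n))).nullMeasurableSet)
        (fun n m hnm => diff_subset_diff_right (hAmono (huanti hnm)))
        ⟨0, measure_ne_top μ _⟩
    have h2 : (⋂ n, (A t \ A (u n))) = (∅ : Set Ω) := by
      rw [← Set.diff_iUnion, ← hkey, Set.diff_self]
    rw [h2] at h1
    simpa using h1
  have hm0pos : 0 < (μ {ω}).toReal := ENNReal.toReal_pos (hch ω) (measure_ne_top μ _)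
  set m0 : ℝ := (μ {ω}).toReal with hm0def
  have hMnn : 0 ≤ M := (abs_nonneg _).trans (hM ω)
  set K : ℝ := (2 * M + 1) / (m0 * m0) with hKdef
  have hKpos : 0 < K := by positivity
  have htendR : Tendsto (fun n => (μ (A t \ A (u n))).toReal) atTop (𝓝 0) := by
    have := (ENNReal.tendsto_toReal (by simp : (0 : ℝ≥0∞) ≠ ∞)).comp htend
    exact this
  obtain ⟨N, hN⟩ := (htendR.eventually_lt_const (div_pos hε hKpos)).exists
  refine ⟨u N, hupos N, ?_⟩
  intro s hts hsu
  rcases eq_or_lt_of_le hts with rfl | htlt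
  · simpa using hε
  have hsub1 : A (u N) ⊆ A s := hAmono hsu.le
  have hsub2 : A s ⊆ A t := hAmono hts
  set mt : ℝ := (μ (A t)).toReal with hmtdef
  set ms : ℝ := (μ (A s)).toReal with hmsdef
  have hm0t : m0 ≤ mt := ENNReal.toReal_mono (measure_ne_top μ _)
    (measure_mono (singleton_subset_iff.2 (hAmem t)))
  have hm0s : m0 ≤ ms := ENNReal.toReal_mono (measure_ne_top μ _)
    (measure_mono (singleton_subset_iff.2 (hAmem s)))
  have hmst : ms ≤ mt := ENNReal.toReal_mono (measure_ne_top μ _) (measure_mono hsub2)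
  have hmt1 : mt ≤ 1 := by
    have h1 : μ (A t) ≤ 1 := le_of_le_of_eq (measure_mono (Set.subset_univ _)) measure_univ
    calc mt ≤ (1 : ℝ≥0∞).toReal := ENNReal.toReal_mono (by simp) h1
      _ = 1 := by simp
  have hmspos : 0 < ms := lt_of_lt_of_le hm0pos hm0s
  have hmtpos : 0 < mt := lt_of_lt_of_le hm0pos hm0t
  have hdiff : (μ (A t \ A s)).toReal = mt - ms := by
    rw [measure_diff hsub2 (hAm s).nullMeasurableSet (measure_ne_top μ _)]
    exact ENNReal.toReal_sub_of_le (measure_mono hsub2) (measure_ne_top μ _)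
  have hdle : mt - ms ≤ (μ (A t \ A (u N))).toReal := by
    rw [← hdiff]
    exact ENNReal.toReal_mono (measure_ne_top μ _)
      (measure_mono (diff_subset_diff_right hsub1))
  have hIdiff : ∫ x in A t \ A s, g x ∂μ = (∫ x in A t, g x ∂μ) - ∫ x in A s, g x ∂μ :=
    integral_diff (hAm s) hg.integrableOn hsub2
  have hIbound : |∫ x in A t \ A s, g x ∂μ| ≤ M * (mt - ms) := by
    rw [← Real.norm_eq_abs, ← hdiff]
    exact norm_setIntegral_le_of_norm_le_const (measure_lt_top μ _)
      (C := M) (fun x _ => by rw [Real.norm_eq_abs]; exact hM x)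
  have hItbound : |∫ x in A t, g x ∂μ| ≤ M * mt := by
    rw [← Real.norm_eq_abs]
    exact norm_setIntegral_le_of_norm_le_const (measure_lt_top μ _)
      (C := M) (fun x _ => by rw [Real.norm_eq_abs]; exact hM x)
  rw [condexp_apply_eq hch (𝓕.le s) hg ω, condexp_apply_eq hch (𝓕.le t) hg ω]
  set Is : ℝ := ∫ x in A s, g x ∂μ with hIs
  set It : ℝ := ∫ x in A t, g x ∂μ with hIt
  have hIsIt : |Is - It| ≤ M * (mt - ms) := by
    have h1 : Is - It = -(∫ x in A t \ A s, g x ∂μ) := by rw [hIdiff]; ring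
    rw [h1, abs_neg]
    exact hIbound
  have hkey2 : |Is / ms - It / mt| ≤ K * (mt - ms) := by
    have he : Is / ms - It / mt = ((Is - It) * mt + It * (mt - ms)) / (ms * mt) := by
      field_simp
      ring
    rw [he, abs_div, abs_of_pos (mul_pos hmspos hmtpos)]
    have hnum : |(Is - It) * mt + It * (mt - ms)| ≤ (2 * M + 1) * (mt - ms) := by
      have h1 : |(Is - It) * mt + It * (mt - ms)| ≤ |Is - It| * mt + |It| * (mt - ms) := by
        refine (abs_add_le _ _).trans ?_
        rw [abs_mul, abs_mul, abs_of_pos hmtpos, abs_of_nonneg (sub_nonneg.2 hmst)]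
      have h2a : |Is - It| * mt ≤ M * (mt - ms) * mt :=
        mul_le_mul_of_nonneg_right hIsIt hmtpos.le
      have h2b : |It| * (mt - ms) ≤ (M * mt) * (mt - ms) :=
        mul_le_mul_of_nonneg_right hItbound (sub_nonneg.2 hmst)
      have h3 : M * (mt - ms) * mt ≤ M * (mt - ms) := by
        nlinarith [mul_nonneg hMnn (sub_nonneg.2 hmst)]
      have h4 : (M * mt) * (mt - ms) ≤ M * (mt - ms) := by
        nlinarith [mul_nonneg hMnn (sub_nonneg.2 hmst)]
      linarith
    have hden : m0 * m0 ≤ ms * mt := mul_le_mul hm0s hm0t hm0pos.le hmspos.le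
    calc |(Is - It) * mt + It * (mt - ms)| / (ms * mt)
        ≤ ((2 * M + 1) * (mt - ms)) / (m0 * m0) :=
          div_le_div₀ (mul_nonneg (by linarith) (sub_nonneg.2 hmst)) hnum
            (mul_pos hm0pos hm0pos) hden
      _ = K * (mt - ms) := by rw [hKdef]; ring
  have hfin : K * (mt - ms) < ε := by
    have h1 : K * (mt - ms) ≤ K * (μ (A t \ A (u N))).toReal :=
      mul_le_mul_of_nonneg_left hdle hKpos.le
    have h2 : K * (μ (A t \ A (u N))).toReal < K * (ε / K) :=
      (mul_lt_mul_iff_right₀ hKpos).2 hN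
    have h3 : K * (ε / K) = ε := mul_div_cancel₀ ε hKpos.ne'
    linarith
  exact lt_of_le_of_lt hkey2 hfin

lemma W_core [Countable Ω] {μ : Measure Ω} [IsProbabilityMeasure μ]
    (𝓕 : Filtration ℝ≥0∞ mΩ) (hch : ∀ ω : Ω, μ {ω} ≠ 0)
    (hrc : ∀ t : ℝ≥0∞, (𝓕 t : MeasurableSpace Ω) = ⨅ s ∈ Ioi t, (𝓕 s : MeasurableSpace Ω))
    (V : ℝ≥0∞ → Ω → ℝ) (hVm : ∀ s, Measurable (V s))
    {M : ℝ} (hVb : ∀ s x, |V s x| ≤ M)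
    {r : ℝ≥0∞ → ℝ} (hr0 : r 0 = 0) (hrt : Tendsto r (𝓝[>] (0 : ℝ≥0∞)) (𝓝 (0 : ℝ)))
    (hmod : ∀ s s' x, |V s x - V s' x| ≤ r ((s - s') + (s' - s)))
    (ω : Ω) {t : ℝ≥0∞} (ht : t ≠ ∞) :
    ∀ ε : ℝ, 0 < ε → ∃ b, t < b ∧ ∀ s, t ≤ s → s < b →
      |(μ[V s|𝓕 s]) ω - (μ[V t|𝓕 t]) ω| < ε := by
  intro ε hε
  have hVint : ∀ s, Integrable (V s) μ := fun s => integrable_of_bound (hVm s) (hVb s)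
  have hδ : ∃ δ : ℝ≥0∞, 0 < δ ∧ ∀ x : ℝ≥0∞, 0 < x → x < δ → r x < ε / 2 := by
    have h2 : ∀ᶠ x in 𝓝[>] (0 : ℝ≥0∞), r x < ε / 2 :=
      hrt.eventually_lt_const (by linarith)
    rw [eventually_iff, mem_nhdsGT_iff_exists_Ioo_subset'
      (show (0 : ℝ≥0∞) < 1 by norm_num)] at h2
    obtain ⟨δ, hδ0, hδsub⟩ := h2
    exact ⟨δ, hδ0, fun x hx1 hx2 => hδsub ⟨hx1, hx2⟩⟩
  obtain ⟨δ, hδ0, hδ⟩ := hδ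
  obtain ⟨b2, hb2, hB2⟩ := condexp_atom_approx 𝓕 hch hrc (hVint t) (hVb t) ω ht
    (show (0 : ℝ) < ε / 2 by linarith)
  refine ⟨min (t + δ) b2, lt_min (ENNReal.lt_add_right ht hδ0.ne') hb2, ?_⟩
  intro s hts hsb
  have hsb1 : s < t + δ := lt_of_lt_of_le hsb (min_le_left _ _)
  have hsb2 : s < b2 := lt_of_lt_of_le hsb (min_le_right _ _)
  rcases eq_or_lt_of_le hts with rfl | hlt
  · simpa using hε
  have hT1 : |(μ[V s|𝓕 s]) ω - (μ[V t|𝓕 s]) ω| ≤ r ((s - t) + (t - s)) := by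
    have hae := condExp_sub (μ := μ) (m := (𝓕 s : MeasurableSpace Ω)) (hVint s) (hVint t)
    have hptw := forall_of_ae hch hae
    have heq : (μ[V s|𝓕 s]) ω - (μ[V t|𝓕 s]) ω = (μ[V s - V t|𝓕 s]) ω := by
      rw [hptw ω]
      simp
    rw [heq]
    exact abs_condexp_le_s11 hch (𝓕.le s) ((hVint s).sub (hVint t))
      (fun x => by simpa using hmod s t x) ω
  have hr1 : r ((s - t) + (t - s)) < ε / 2 := by
    have hts0 : t - s = 0 := tsub_eq_zero_of_le hts
    rw [hts0, add_zero]
    refine hδ _ (tsub_pos_of_lt hlt) ?_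
    rw [ENNReal.sub_lt_iff_lt_right ht hts]
    rw [add_comm]
    exact hsb1
  have hT2 : |(μ[V t|𝓕 s]) ω - (μ[V t|𝓕 t]) ω| < ε / 2 := hB2 s hts hsb2
  calc |(μ[V s|𝓕 s]) ω - (μ[V t|𝓕 t]) ω|
      ≤ |(μ[V s|𝓕 s]) ω - (μ[V t|𝓕 s]) ω| + |(μ[V t|𝓕 s]) ω - (μ[V t|𝓕 t]) ω| :=
        abs_sub_le _ _ _
    _ < ε / 2 + ε / 2 := add_lt_add_of_le_of_lt (hT1.trans hr1.le) hT2
    _ = ε := by ring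

/-- Lemma 4.1: the processes `W¹_t = E[U¹(t, τ_h²(t)) | 𝓕_t]` and
`W²_t = E[U²(ρ_h¹(t), t) | 𝓕_t]` are (pathwise) right continuous at every `t ∈ [0,∞)`. -/
theorem W_rightContinuous [Countable Ω] (μ : Measure Ω) [IsProbabilityMeasure μ]
    (𝓕 : Filtration ℝ≥0∞ mΩ) (hsetup : UsualSetup μ 𝓕)
    (U1 U2 : ℝ≥0∞ → ℝ≥0∞ → Ω → ℝ) (r : ℝ≥0∞ → ℝ)
    (hU1 : PayoffAssumption 𝓕 U1 r) (hU2 : PayoffAssumption 𝓕 U2 r)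
    (ε h : ℝ) (hε : 0 < ε) (hh : 0 < h)
    (ρbar1 τbar2 : ℕ → Ω → ℝ≥0∞)
    (hρ1 : IsOptRho1 μ 𝓕 U1 ε h ρbar1) (hτ2 : IsOptTau2 μ 𝓕 U2 ε h τbar2) :
    ∀ ω : Ω, ∀ t : ℝ≥0∞, t ≠ ∞ →
      ContinuousWithinAt (fun s => W1v μ 𝓕 U1 h τbar2 s ω) (Ici t) t ∧
      ContinuousWithinAt (fun s => W2v μ 𝓕 U2 h ρbar1 s ω) (Ici t) t := by
  obtain ⟨hch, hrc, -, -⟩ := hsetup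
  obtain ⟨⟨M1, hM1⟩, hU1meas, -, -, -, hr0, hrt, hU1mod⟩ := hU1
  obtain ⟨⟨M2, hM2⟩, hU2meas, -, -, -, -, -, hU2mod⟩ := hU2
  intro ω t ht
  constructor
  · -- W¹
    have hτm : Measurable (τbar2 (gridIdx h t)) :=
      ((hτ2 (gridIdx h t)).1.1.measurable.untopD 0).mono (hτ2 (gridIdx h t)).1.1.measurableSpace_le
        le_rfl
    have hVm : ∀ s, Measurable (fun ω' => U1 s (τbar2 (gridIdx h t) ω') ω') := fun s =>
      measurable_comp_countable hτm (fun a => (hU1meas s a).mono (𝓕.le _) le_rfl)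
    have hVb : ∀ s x, |U1 s (τbar2 (gridIdx h t) x) x| ≤ M1 := fun s x => hM1 _ _ _
    have hVmod : ∀ s s' x, |U1 s (τbar2 (gridIdx h t) x) x - U1 s' (τbar2 (gridIdx h t) x) x|
        ≤ r ((s - s') + (s' - s)) := fun s s' x => by
      have hu := hU1mod s (τbar2 (gridIdx h t) x) s' (τbar2 (gridIdx h t) x) x
      simpa [dd, tsub_self] using hu
    apply cwa_of
    intro ε' hε'
    obtain ⟨b1, hb1, hgrid⟩ := gridIdx_eventually_const hh ht
    obtain ⟨b2, hb2, hcore⟩ := W_core 𝓕 hch hrc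
      (fun s ω' => U1 s (τbar2 (gridIdx h t) ω') ω') hVm hVb hr0 hrt hVmod ω ht ε' hε'
    refine ⟨min b1 b2, lt_min hb1 hb2, ?_⟩
    intro s hts hsb
    obtain ⟨hsne, hsidx⟩ := hgrid s hts (lt_of_lt_of_le hsb (min_le_left _ _))
    have hWs : W1v μ 𝓕 U1 h τbar2 s ω
        = (μ[fun ω' => U1 s (τbar2 (gridIdx h t) ω') ω'|𝓕 s]) ω := by
      have hfun : (fun ω' => U1 s (gridStrat h τbar2 s ω') ω')
          = fun ω' => U1 s (τbar2 (gridIdx h t) ω') ω' := by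
        funext ω'
        simp only [gridStrat, if_neg hsne, hsidx]
      simp only [W1v, hfun]
    have hWt : W1v μ 𝓕 U1 h τbar2 t ω
        = (μ[fun ω' => U1 t (τbar2 (gridIdx h t) ω') ω'|𝓕 t]) ω := by
      have hfun : (fun ω' => U1 t (gridStrat h τbar2 t ω') ω')
          = fun ω' => U1 t (τbar2 (gridIdx h t) ω') ω' := by
        funext ω'
        simp only [gridStrat, if_neg ht]
      simp only [W1v, hfun]
    rw [hWs, hWt]
    exact hcore s hts (lt_of_lt_of_le hsb (min_le_right _ _))
  · -- W²
    have hρm : Measurable (ρbar1 (gridIdx h t)) :=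
      ((hρ1 (gridIdx h t)).1.1.measurable.untopD 0).mono (hρ1 (gridIdx h t)).1.1.measurableSpace_le
        le_rfl
    have hVm : ∀ s, Measurable (fun ω' => U2 (ρbar1 (gridIdx h t) ω') s ω') := fun s =>
      measurable_comp_countable hρm (fun a => (hU2meas a s).mono (𝓕.le _) le_rfl)
    have hVb : ∀ s x, |U2 (ρbar1 (gridIdx h t) x) s x| ≤ M2 := fun s x => hM2 _ _ _
    have hVmod : ∀ s s' x, |U2 (ρbar1 (gridIdx h t) x) s x - U2 (ρbar1 (gridIdx h t) x) s' x|
        ≤ r ((s - s') + (s' - s)) := fun s s' x => by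
      have hu := hU2mod (ρbar1 (gridIdx h t) x) s (ρbar1 (gridIdx h t) x) s' x
      simpa [dd, tsub_self] using hu
    apply cwa_of
    intro ε' hε'
    obtain ⟨b1, hb1, hgrid⟩ := gridIdx_eventually_const hh ht
    obtain ⟨b2, hb2, hcore⟩ := W_core 𝓕 hch hrc
      (fun s ω' => U2 (ρbar1 (gridIdx h t) ω') s ω') hVm hVb hr0 hrt hVmod ω ht ε' hε'
    refine ⟨min b1 b2, lt_min hb1 hb2, ?_⟩
    intro s hts hsb
    obtain ⟨hsne, hsidx⟩ := hgrid s hts (lt_of_lt_of_le hsb (min_le_left _ _))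
    have hWs : W2v μ 𝓕 U2 h ρbar1 s ω
        = (μ[fun ω' => U2 (ρbar1 (gridIdx h t) ω') s ω'|𝓕 s]) ω := by
      have hfun : (fun ω' => U2 (gridStrat h ρbar1 s ω') s ω')
          = fun ω' => U2 (ρbar1 (gridIdx h t) ω') s ω' := by
        funext ω'
        simp only [gridStrat, if_neg hsne, hsidx]
      simp only [W2v, hfun]
    have hWt : W2v μ 𝓕 U2 h ρbar1 t ω
        = (μ[fun ω' => U2 (ρbar1 (gridIdx h t) ω') t ω'|𝓕 t]) ω := by
      have hfun : (fun ω' => U2 (gridStrat h ρbar1 t ω') t ω')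
          = fun ω' => U2 (ρbar1 (gridIdx h t) ω') t ω' := by
        funext ω'
        simp only [gridStrat, if_neg ht]
      simp only [W2v, hfun]
    rw [hWs, hWt]
    exact hcore s hts (lt_of_lt_of_le hsb (min_le_right _ _))


end StoppingGames
end
end
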